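/- arXiv:1612.09577 — 4 statements merged into one kernel-verified Lean document; each statement's English description precedes it below -/
import Mathlib

section
/- Let q be continuous and real-valued on [0,d], and let f₀ solve f₀'' = q f₀ with f₀(0)=1, f₀'(0)=0, with f₀ nonvanishing on [0,d]. Define X^{(0)} ≡ 1, X^{(n)}(x) = n∫₀^x X^{(n-1)}(s)(f₀²(s))^{(-1)^n} ds, and X̃^{(0)} ≡ 1, X̃^{(n)}(x) = n∫₀^x X̃^{(n-1)}(s)(f₀²(s))^{(-1)^{n-1}} ds, and set φ_k = f₀·X^{(k)} for k odd and φ_k = f₀·X̃^{(k)} for k even. Then for each k ≥ 2, the function φ_k satisfies φ_k'' - q·φ_k = k(k-1)·φ_{k-2} on [0,d], together with φ_k(0) = 0 and φ_k'(0) = 0. -/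
open MeasureTheory Set Filter Topology

/-- Auxiliary induction: each formal power in a chain is continuous on the open interval
`Ioo a b` (where `f₀` has no zeros), and the next one has the expected derivative. -/
lemma aux_chain (a b : ℝ) (ha : a < (0:ℝ)) (hb : (0:ℝ) < b)
    (f₀ : ℝ → ℝ) (hf₀c : Continuous f₀)
    (hne : ∀ x ∈ Ioo a b, f₀ x ≠ 0)
    (Y : ℕ → ℝ → ℝ) (c : ℕ → ℤ)
    (hY0 : ∀ x, Y 0 x = 1)
    (hY : ∀ n : ℕ, 1 ≤ n → ∀ x,
      Y n x = n * ∫ s in (0:ℝ)..x, Y (n - 1) s * (f₀ s ^ 2) ^ (c n)) :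
    ∀ n : ℕ, ContinuousOn (Y n) (Ioo a b) ∧
      ∀ x ∈ Ioo a b,
        HasDerivAt (Y (n + 1)) (((n + 1 : ℕ) : ℝ) * (Y n x * (f₀ x ^ 2) ^ (c (n + 1)))) x := by
  have h0m : (0:ℝ) ∈ Ioo a b := ⟨ha, hb⟩
  have key : ∀ n : ℕ, ContinuousOn (Y n) (Ioo a b) → ∀ x ∈ Ioo a b,
      HasDerivAt (Y (n + 1)) (((n + 1 : ℕ) : ℝ) * (Y n x * (f₀ x ^ 2) ^ (c (n + 1)))) x := by
    intro n hcont x hx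
    set g : ℝ → ℝ := fun s => Y n s * (f₀ s ^ 2) ^ (c (n + 1)) with hg
    have hgc : ContinuousOn g (Ioo a b) := by
      apply hcont.mul
      exact (hf₀c.continuousOn.pow 2).zpow₀ _
        (fun s hs => Or.inl (pow_ne_zero 2 (hne s hs)))
    have hsub : uIcc (0:ℝ) x ⊆ Ioo a b :=
      (ordConnected_Ioo).uIcc_subset h0m hx
    have hint : IntervalIntegrable g volume 0 x :=
      (hgc.mono hsub).intervalIntegrable
    have hmeas := ContinuousOn.stronglyMeasurableAtFilter (μ := volume) isOpen_Ioo hgc x hx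
    have hca : ContinuousAt g x := hgc.continuousAt (isOpen_Ioo.mem_nhds hx)
    have hd : HasDerivAt (fun u => ∫ s in (0:ℝ)..u, g s) (g x) x :=
      intervalIntegral.integral_hasDerivAt_right hint hmeas hca
    have heq : Y (n + 1) = fun u => ((n + 1 : ℕ) : ℝ) * ∫ s in (0:ℝ)..u, g s := by
      funext u
      rw [hY (n + 1) (by omega) u, Nat.add_sub_cancel]
    rw [heq]
    exact hd.const_mul _
  intro n
  induction n with
  | zero =>
    have hc0 : ContinuousOn (Y 0) (Ioo a b) := by
      have : Y 0 = fun _ => (1:ℝ) := funext hY0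
      rw [this]; exact continuousOn_const
    exact ⟨hc0, key 0 hc0⟩
  | succ n ih =>
    have hc : ContinuousOn (Y (n + 1)) (Ioo a b) :=
      fun x hx => (key n ih.1 x hx).continuousAt.continuousWithinAt
    exact ⟨hc, key (n + 1) hc⟩

/-- Generic computation of the second-order ODE satisfied by `f₀ * Y k`. -/
lemma key_ode (a b d : ℝ) (ha : a < (0:ℝ)) (hb : (0:ℝ) < b)
    (hIcc : Icc 0 d ⊆ Ioo a b)
    (q f₀ : ℝ → ℝ) (hf₀C2 : ContDiff ℝ 2 f₀)
    (hode : ∀ x ∈ Icc 0 d, deriv (deriv f₀) x = q x * f₀ x)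
    (hne : ∀ x ∈ Ioo a b, f₀ x ≠ 0)
    (Y : ℕ → ℝ → ℝ) (c : ℕ → ℤ)
    (hY0 : ∀ x, Y 0 x = 1)
    (hY : ∀ n : ℕ, 1 ≤ n → ∀ x,
      Y n x = n * ∫ s in (0:ℝ)..x, Y (n - 1) s * (f₀ s ^ 2) ^ (c n))
    (k : ℕ) (hk : 2 ≤ k) (hck : c k = -1) (hck1 : c (k - 1) = 1) :
    (∀ x ∈ Icc 0 d,
      deriv (deriv (fun t => f₀ t * Y k t)) x - q x * (f₀ x * Y k x)
        = (k : ℝ) * ((k : ℝ) - 1) * (f₀ x * Y (k - 2) x)) ∧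
      f₀ 0 * Y k 0 = 0 ∧ deriv (fun t => f₀ t * Y k t) 0 = 0 := by
  have h0m : (0:ℝ) ∈ Ioo a b := ⟨ha, hb⟩
  have aux := aux_chain a b ha hb f₀ hf₀C2.continuous hne Y c hY0 hY
  have hf₀d : ∀ x, HasDerivAt f₀ (deriv f₀ x) x := fun x =>
    ((hf₀C2.differentiable (by norm_num)) x).hasDerivAt
  have hf₀'d : ∀ x, HasDerivAt (deriv f₀) (deriv (deriv f₀) x) x := by
    have h2 : ContDiff ℝ ((1 + 1 : ℕ) : WithTop ℕ∞) f₀ := by exact_mod_cast hf₀C2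
    have h1 : ContDiff ℝ (1 : ℕ) (deriv f₀) := by
      simpa using ContDiff.iterate_deriv' 1 1 h2
    exact fun x => ((h1.differentiable (by norm_num)) x).hasDerivAt
  have hYk : ∀ x ∈ Ioo a b,
      HasDerivAt (Y k) ((k : ℝ) * (Y (k - 1) x * (f₀ x ^ 2)⁻¹)) x := by
    intro x hx
    have h := (aux (k - 1)).2 x hx
    rw [Nat.sub_add_cancel (by omega : 1 ≤ k), hck, zpow_neg_one] at h
    exact h
  have hYk1 : ∀ x ∈ Ioo a b,
      HasDerivAt (Y (k - 1)) (((k - 1 : ℕ) : ℝ) * (Y (k - 2) x * f₀ x ^ 2)) x := by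
    intro x hx
    have h := (aux (k - 2)).2 x hx
    rw [(by omega : k - 2 + 1 = k - 1)] at h
    rw [hck1, zpow_one] at h
    exact h
  set D : ℝ → ℝ := fun x => deriv f₀ x * Y k x + (k : ℝ) * Y (k - 1) x * (f₀ x)⁻¹ with hD
  have hφd : ∀ x ∈ Ioo a b, HasDerivAt (fun t => f₀ t * Y k t) (D x) x := by
    intro x hx
    have h := (hf₀d x).mul (hYk x hx)
    convert h using 1
    case e'_4 => rfl
    case e'_5 => rfl
    case e'_8 => rfl
    have hx0 := hne x hx
    rw [hD]
    field_simp
  have hderiv_eq : ∀ x ∈ Ioo a b, deriv (fun t => f₀ t * Y k t) x = D x :=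
    fun x hx => (hφd x hx).deriv
  have hDd : ∀ x ∈ Ioo a b,
      HasDerivAt D
        (deriv (deriv f₀) x * Y k x + (k : ℝ) * ((k : ℝ) - 1) * (f₀ x * Y (k - 2) x)) x := by
    intro x hx
    have h1 := (hf₀'d x).mul (hYk x hx)
    have h2 : HasDerivAt (fun t => (f₀ t)⁻¹) (-(deriv f₀ x) / f₀ x ^ 2) x :=
      (hf₀d x).inv (hne x hx)
    have h3 := (hYk1 x hx).const_mul (k : ℝ)
    have h5 := h1.add (h3.mul h2)
    convert h5 using 1
    case e'_4 => rfl
    case e'_5 => rfl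
    case e'_8 => rfl
    have hx0 := hne x hx
    have hc : ((k - 1 : ℕ) : ℝ) = (k : ℝ) - 1 := by
      rw [Nat.cast_sub (by omega : 1 ≤ k)]; norm_num
    rw [hc]
    field_simp
    ring
  refine ⟨?_, ?_, ?_⟩
  · intro x hxI
    have hx : x ∈ Ioo a b := hIcc hxI
    have hEv : deriv (fun t => f₀ t * Y k t) =ᶠ[𝓝 x] D :=
      Filter.eventuallyEq_of_mem (isOpen_Ioo.mem_nhds hx) hderiv_eq
    rw [hEv.deriv_eq, (hDd x hx).deriv, hode x hxI]
    ring
  · have hYk0 : Y k 0 = 0 := by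
      rw [hY k (by omega) 0, intervalIntegral.integral_same, mul_zero]
    rw [hYk0, mul_zero]
  · have hYk0 : Y k 0 = 0 := by
      rw [hY k (by omega) 0, intervalIntegral.integral_same, mul_zero]
    have hYk10 : Y (k - 1) 0 = 0 := by
      rw [hY (k - 1) (by omega) 0, intervalIntegral.integral_same, mul_zero]
    rw [hderiv_eq 0 h0m, hD]
    simp only [hYk0, hYk10]
    ring

theorem formal_powers_ODE (d : ℝ) (q f₀ : ℝ → ℝ)
    (hq : ContinuousOn q (Icc 0 d))
    (hf₀C2 : ContDiff ℝ 2 f₀)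
    (hode : ∀ x ∈ Icc 0 d, deriv (deriv f₀) x = q x * f₀ x)
    (hf₀0 : f₀ 0 = 1) (hf₀'0 : deriv f₀ 0 = 0)
    (hf₀ne : ∀ x ∈ Icc 0 d, f₀ x ≠ 0)
    (X Xt : ℕ → ℝ → ℝ)
    (hX0 : ∀ x, X 0 x = 1)
    (hXt0 : ∀ x, Xt 0 x = 1)
    (hX : ∀ n : ℕ, 1 ≤ n → ∀ x,
      X n x = n * ∫ s in (0:ℝ)..x, X (n - 1) s * (f₀ s ^ 2) ^ ((-1 : ℤ) ^ n))
    (hXt : ∀ n : ℕ, 1 ≤ n → ∀ x,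
      Xt n x = n * ∫ s in (0:ℝ)..x, Xt (n - 1) s * (f₀ s ^ 2) ^ ((-1 : ℤ) ^ (n - 1)))
    (φ : ℕ → ℝ → ℝ)
    (hφ : ∀ k x, φ k x = if Odd k then f₀ x * X k x else f₀ x * Xt k x) :
    ∀ k : ℕ, 2 ≤ k →
      (∀ x ∈ Icc 0 d, deriv (deriv (φ k)) x - q x * φ k x = k * (k - 1) * φ (k - 2) x) ∧
      φ k 0 = 0 ∧ deriv (φ k) 0 = 0 := by
  -- find an open interval around `Icc 0 d ∪ {0}` where `f₀` has no zeros
  have hKc : IsCompact (insert (0:ℝ) (Icc 0 d)) := isCompact_Icc.insert 0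
  have hU : IsOpen {x : ℝ | f₀ x ≠ 0} := by
    have : {x : ℝ | f₀ x ≠ 0} = f₀ ⁻¹' ({0}ᶜ) := rfl
    rw [this]
    exact (isOpen_compl_singleton).preimage hf₀C2.continuous
  have hKU : insert (0:ℝ) (Icc 0 d) ⊆ {x : ℝ | f₀ x ≠ 0} := by
    rintro x (rfl | hx)
    · simp [hf₀0]
    · exact hf₀ne x hx
  obtain ⟨δ, hδ, hsub⟩ := hKc.exists_cthickening_subset_open hU hKU
  set A : ℝ := -δ with hA
  set B : ℝ := max d 0 + δ with hB
  have hA0 : A < 0 := by simp [hA]; linarith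
  have hB0 : (0:ℝ) < B := by
    have : (0:ℝ) ≤ max d 0 := le_max_right _ _
    simp only [hB]; linarith
  have hne : ∀ x ∈ Ioo A B, f₀ x ≠ 0 := by
    intro x hx
    set D' : ℝ := max d 0 with hD'
    set y : ℝ := max 0 (min x D') with hy
    have hyK : y ∈ insert (0:ℝ) (Icc 0 d) := by
      rcases le_or_gt d 0 with h | h
      · left
        have : D' = 0 := max_eq_right h
        rw [hy, this]
        exact max_eq_left (min_le_right _ _)
      · right
        refine ⟨le_max_left _ _, ?_⟩
        have hD'd : D' = d := max_eq_left h.le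
        rw [hy, hD'd]
        exact max_le h.le (min_le_right _ _)
    have hdist : dist x y ≤ δ := by
      have hx1 : -δ < x := by simpa [hA] using hx.1
      have hx2 : x < D' + δ := by simpa [hB, hD'] using hx.2
      have hD'0 : (0:ℝ) ≤ D' := le_max_right _ _
      rw [Real.dist_eq, abs_le]
      constructor
      · -- -δ ≤ x - y, i.e. y ≤ x + δ
        have h1 : (0:ℝ) ≤ x + δ := by linarith
        have h2 : min x D' ≤ x + δ := by
          have := min_le_left x D'; linarith
        have : y ≤ x + δ := max_le h1 h2
        linarith
      · -- x - y ≤ δ, i.e. x ≤ y + δ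
        have hymin : min x D' ≤ y := le_max_right _ _
        rcases le_total x D' with h | h
        · have : min x D' = x := min_eq_left h
          linarith [hymin, this ▸ hymin]
        · have hmin : min x D' = D' := min_eq_right h
          rw [hmin] at hymin
          linarith
    have : x ∈ {x : ℝ | f₀ x ≠ 0} :=
      hsub (Metric.mem_cthickening_of_dist_le x y δ _ hyK hdist)
    exact this
  have hIcc : Icc 0 d ⊆ Ioo A B := by
    intro x hx
    refine ⟨by linarith [hx.1, hA0, (show A < 0 from hA0)], ?_⟩
    have h1 : x ≤ max d 0 := le_trans hx.2 (le_max_left _ _)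
    simp only [hB]; linarith
  intro k hk
  rcases Nat.even_or_odd k with hkeven | hkodd
  · -- even case: use Xt
    have hφk : φ k = fun x => f₀ x * Xt k x := by
      funext x
      rw [hφ]
      simp [Nat.not_odd_iff_even.mpr hkeven]
    have hk2even : Even (k - 2) := by
      obtain ⟨j, hj⟩ := hkeven
      exact ⟨j - 1, by omega⟩
    have hφk2 : φ (k - 2) = fun x => f₀ x * Xt (k - 2) x := by
      funext x
      rw [hφ]
      simp [Nat.not_odd_iff_even.mpr hk2even]
    have hck : ((-1 : ℤ) ^ (k - 1)) = -1 := by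
      refine Odd.neg_one_pow ?_
      obtain ⟨j, hj⟩ := hkeven
      exact ⟨j - 1, by omega⟩
    have hck1 : ((-1 : ℤ) ^ (k - 1 - 1)) = 1 := by
      refine Even.neg_one_pow ?_
      obtain ⟨j, hj⟩ := hkeven
      exact ⟨j - 1, by omega⟩
    obtain ⟨h1, h2, h3⟩ := key_ode A B d hA0 hB0 hIcc q f₀ hf₀C2 hode hne Xt
      (fun n => (-1 : ℤ) ^ (n - 1)) hXt0 hXt k hk hck hck1
    rw [hφk, hφk2]
    refine ⟨?_, h2, h3⟩
    intro x hx
    have := h1 x hx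
    push_cast at this ⊢
    linarith [this]
  · -- odd case: use X
    have hφk : φ k = fun x => f₀ x * X k x := by
      funext x
      rw [hφ]
      simp [hkodd]
    have hk2odd : Odd (k - 2) := by
      obtain ⟨j, hj⟩ := hkodd
      exact ⟨j - 1, by omega⟩
    have hφk2 : φ (k - 2) = fun x => f₀ x * X (k - 2) x := by
      funext x
      rw [hφ]
      simp [hk2odd]
    have hck : ((-1 : ℤ) ^ k) = -1 := Odd.neg_one_pow hkodd
    have hck1 : ((-1 : ℤ) ^ (k - 1)) = 1 := by
      refine Even.neg_one_pow ?_
      obtain ⟨j, hj⟩ := hkodd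
      exact ⟨j, by omega⟩
    obtain ⟨h1, h2, h3⟩ := key_ode A B d hA0 hB0 hIcc q f₀ hf₀C2 hode hne X
      (fun n => (-1 : ℤ) ^ n) hX0 hX k hk hck hck1
    rw [hφk, hφk2]
    refine ⟨?_, h2, h3⟩
    intro x hx
    have := h1 x hx
    push_cast at this ⊢
    linarith [this]
end

section
/- Under the hypotheses of the formal powers construction (q continuous on [0,d], f₀ nonvanishing solution of f₀''=q f₀ with f₀(0)=1, f₀'(0)=0), the series u(ω,x) = Σ_{n=0}^∞ (-iω)^n φ_n(x)/n! converges uniformly in x on [0,d] for each fixed ω ∈ ℂ, and its sum solves -u'' + q u = ω² u with u(0)=1, u'(0) = -iω. -/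
open MeasureTheory Set Filter Topology

private lemma recAux (a b M : ℝ) (hab : a ≤ b) (ha0 : a ≤ 0) (hb0 : 0 ≤ b)
    (g : ℕ → ℝ → ℝ) (hgc : ∀ n, ContinuousOn (g n) (Icc a b))
    (hM : ∀ n, ∀ x ∈ Icc a b, |g n x| ≤ M)
    (Y : ℕ → ℝ → ℝ) (hY0 : ∀ x, Y 0 x = 1)
    (hY : ∀ n, 1 ≤ n → ∀ x, Y n x = n * ∫ s in (0:ℝ)..x, Y (n-1) s * g n s) :
    ∀ n, ContinuousOn (Y n) (Icc a b) ∧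
      (∀ x ∈ Icc a b, |Y n x| ≤ M^n * |x|^n) ∧
      (∀ x ∈ Ioo a b, HasDerivAt (Y n) (n * (Y (n-1) x * g n x)) x) := by
  have h0m : (0:ℝ) ∈ Icc a b := ⟨ha0, hb0⟩
  have hMnn : 0 ≤ M := le_trans (abs_nonneg _) (hM 0 0 h0m)
  intro n
  induction n with
  | zero =>
    refine ⟨continuousOn_const.congr (fun x _ => hY0 x), fun x _ => by simp [hY0], ?_⟩
    intro x hx
    have : HasDerivAt (fun _ : ℝ => (1:ℝ)) 0 x := hasDerivAt_const x 1
    simpa using this.congr_of_eventuallyEq (Eventually.of_forall fun y => hY0 y)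
  | succ n ih =>
    have hn1 : 1 ≤ n + 1 := Nat.le_add_left 1 n
    have hYe : ∀ x, Y (n+1) x = ((n+1 : ℕ) : ℝ) * ∫ s in (0:ℝ)..x, Y n s * g (n+1) s := by
      intro x; simpa using hY (n+1) hn1 x
    have hic : ContinuousOn (fun s => Y n s * g (n+1) s) (Icc a b) := ih.1.mul (hgc (n+1))
    have hii : IntervalIntegrable (fun s => Y n s * g (n+1) s) volume a b := by
      apply ContinuousOn.intervalIntegrable
      rwa [Set.uIcc_of_le hab]
    have hsub : ∀ x ∈ Icc a b, Set.uIcc (0:ℝ) x ⊆ Icc a b := by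
      intro x hx
      exact Set.uIcc_subset_Icc h0m hx
    have hcont : ContinuousOn (Y (n+1)) (Icc a b) := by
      have h1 : ContinuousOn (fun x => ((n+1:ℕ):ℝ) * ∫ s in (0:ℝ)..x, Y n s * g (n+1) s)
          (Set.uIcc a b) :=
        continuousOn_const.mul
          (intervalIntegral.continuousOn_primitive_interval' hii
            (by rw [Set.uIcc_of_le hab]; exact h0m))
      rw [Set.uIcc_of_le hab] at h1
      exact h1.congr fun x _ => hYe x
    refine ⟨hcont, ?_, ?_⟩
    · -- bound
      intro x hx
      have key : |∫ s in (0:ℝ)..x, Y n s * g (n+1) s| ≤ M^(n+1) * |x|^(n+1) / (n+1) := by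
        rcases le_or_gt 0 x with h0x | h0x
        · have hIsub : Icc (0:ℝ) x ⊆ Icc a b := Icc_subset_Icc ha0 hx.2
          have hii0 : IntervalIntegrable (fun s => Y n s * g (n+1) s) volume 0 x :=
            ContinuousOn.intervalIntegrable (by rw [Set.uIcc_of_le h0x]; exact hic.mono hIsub)
          have hbii : IntervalIntegrable (fun s => M^(n+1) * s^n) volume 0 x :=
            (Continuous.intervalIntegrable (by continuity) 0 x)
          calc |∫ s in (0:ℝ)..x, Y n s * g (n+1) s|
              ≤ ∫ s in (0:ℝ)..x, |Y n s| * |g (n+1) s| := by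
                simpa [Real.norm_eq_abs, abs_mul] using
                  intervalIntegral.norm_integral_le_integral_norm
                    (f := fun s => Y n s * g (n+1) s) (a := (0:ℝ)) (b := x) (μ := volume) h0x
            _ ≤ ∫ s in (0:ℝ)..x, M^(n+1) * s^n := by
                apply intervalIntegral.integral_mono_on h0x
                  (by simpa [abs_mul] using hii0.abs) hbii
                intro s hs
                have hsm : s ∈ Icc a b := hIsub hs
                calc |Y n s| * |g (n+1) s| ≤ (M^n * |s|^n) * M :=
                      mul_le_mul (ih.2.1 s hsm) (hM (n+1) s hsm) (abs_nonneg _) (by positivity)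
                  _ = M^(n+1) * s^n := by rw [abs_of_nonneg hs.1]; ring
            _ = M^(n+1) * (x^(n+1) - 0^(n+1)) / (n+1) := by
                rw [intervalIntegral.integral_const_mul, integral_pow]; ring
            _ ≤ M^(n+1) * |x|^(n+1) / (n+1) := by
                rw [abs_of_nonneg h0x]; simp
        · have hIsub : Icc x (0:ℝ) ⊆ Icc a b := Icc_subset_Icc hx.1 hb0
          have hii0 : IntervalIntegrable (fun s => Y n s * g (n+1) s) volume x 0 :=
            ContinuousOn.intervalIntegrable (by rw [Set.uIcc_of_le h0x.le]; exact hic.mono hIsub)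
          have hbii : IntervalIntegrable (fun s => M^(n+1) * (-s)^n) volume x 0 :=
            (Continuous.intervalIntegrable (by continuity) x 0)
          rw [intervalIntegral.integral_symm, abs_neg]
          calc |∫ s in x..(0:ℝ), Y n s * g (n+1) s|
              ≤ ∫ s in x..(0:ℝ), |Y n s| * |g (n+1) s| := by
                simpa [Real.norm_eq_abs, abs_mul] using
                  intervalIntegral.norm_integral_le_integral_norm
                    (f := fun s => Y n s * g (n+1) s) (a := x) (b := (0:ℝ)) (μ := volume) h0x.le
            _ ≤ ∫ s in x..(0:ℝ), M^(n+1) * (-s)^n := by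
                apply intervalIntegral.integral_mono_on h0x.le
                  (by simpa [abs_mul] using hii0.abs) hbii
                intro s hs
                have hsm : s ∈ Icc a b := hIsub hs
                calc |Y n s| * |g (n+1) s| ≤ (M^n * |s|^n) * M :=
                      mul_le_mul (ih.2.1 s hsm) (hM (n+1) s hsm) (abs_nonneg _) (by positivity)
                  _ = M^(n+1) * (-s)^n := by rw [abs_of_nonpos hs.2]; ring
            _ = M^(n+1) * ((-x)^(n+1) - 0^(n+1)) / (n+1) := by
                rw [intervalIntegral.integral_const_mul]
                have hcn : ∫ s in x..(0:ℝ), (-s)^n = ∫ s in (0:ℝ)..(-x), s^n := by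
                  simpa using intervalIntegral.integral_comp_neg (a := x) (b := (0:ℝ))
                    (fun t => t^n)
                rw [hcn, integral_pow]; ring
            _ ≤ M^(n+1) * |x|^(n+1) / (n+1) := by
                rw [abs_of_neg h0x]; simp
      rw [hYe x, abs_mul, Nat.abs_cast]
      calc ((n+1:ℕ):ℝ) * |∫ s in (0:ℝ)..x, Y n s * g (n+1) s|
          ≤ ((n+1:ℕ):ℝ) * (M^(n+1) * |x|^(n+1) / (n+1)) :=
            mul_le_mul_of_nonneg_left key (by positivity)
        _ = M^(n+1) * |x|^(n+1) := by field_simp; push_cast; ring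
    · -- derivative
      intro x hx
      have hxI : x ∈ Icc a b := Ioo_subset_Icc_self hx
      have hmeas : StronglyMeasurableAtFilter (fun s => Y n s * g (n+1) s) (𝓝 x) volume :=
        ContinuousOn.stronglyMeasurableAtFilter isOpen_Ioo (hic.mono Ioo_subset_Icc_self) x hx
      have hca : ContinuousAt (fun s => Y n s * g (n+1) s) x :=
        hic.continuousAt (Icc_mem_nhds hx.1 hx.2)
      have hii0 : IntervalIntegrable (fun s => Y n s * g (n+1) s) volume 0 x :=
        ContinuousOn.intervalIntegrable (hic.mono (hsub x hxI))
      have hd := (intervalIntegral.integral_hasDerivAt_right hii0 hmeas hca).const_mul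
        ((n+1:ℕ):ℝ)
      have hfinal := hd.congr_of_eventuallyEq (Eventually.of_forall fun y => hYe y)
      simpa using hfinal

set_option maxHeartbeats 2000000 in
theorem SPPS_representation (d : ℝ) (q f₀ : ℝ → ℝ)
    (hq : ContinuousOn q (Icc 0 d))
    (hf₀C2 : ContDiff ℝ 2 f₀)
    (hode : ∀ x ∈ Icc 0 d, deriv (deriv f₀) x = q x * f₀ x)
    (hf₀0 : f₀ 0 = 1) (hf₀'0 : deriv f₀ 0 = 0)
    (hf₀ne : ∀ x ∈ Icc 0 d, f₀ x ≠ 0)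
    (X Xt : ℕ → ℝ → ℝ)
    (hX0 : ∀ x, X 0 x = 1)
    (hXt0 : ∀ x, Xt 0 x = 1)
    (hX : ∀ n : ℕ, 1 ≤ n → ∀ x,
      X n x = n * ∫ s in (0:ℝ)..x, X (n - 1) s * (f₀ s ^ 2) ^ ((-1 : ℤ) ^ n))
    (hXt : ∀ n : ℕ, 1 ≤ n → ∀ x,
      Xt n x = n * ∫ s in (0:ℝ)..x, Xt (n - 1) s * (f₀ s ^ 2) ^ ((-1 : ℤ) ^ (n - 1)))
    (φ : ℕ → ℝ → ℝ)
    (hφ : ∀ k x, φ k x = if Odd k then f₀ x * X k x else f₀ x * Xt k x)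
    (ω : ℂ) (u : ℝ → ℂ)
    (hu : ∀ x, u x = ∑' n : ℕ, (-(Complex.I * ω)) ^ n * (φ n x : ℂ) / (Nat.factorial n)) :
    TendstoUniformlyOn
      (fun N x => ∑ n ∈ Finset.range N,
        (-(Complex.I * ω)) ^ n * (φ n x : ℂ) / (Nat.factorial n))
      u atTop (Icc 0 d) ∧
    (∀ x ∈ Icc 0 d, -deriv (deriv u) x + q x * u x = ω ^ 2 * u x) ∧
    u 0 = 1 ∧ deriv u 0 = -(Complex.I * ω) := by
  have hf₀c : Continuous f₀ := hf₀C2.continuous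
  -- the enlarged interval [a, b]
  set d' : ℝ := max d 0 with hd'def
  have hd'0 : 0 ≤ d' := le_max_right d 0
  have hS : ∀ x ∈ Icc (0:ℝ) d', f₀ x ≠ 0 := by
    intro x hx
    rcases le_or_gt 0 d with hd | hd
    · exact hf₀ne x (by simpa [hd'def, max_eq_left hd] using hx)
    · have : x = 0 := le_antisymm (by simpa [hd'def, max_eq_right hd.le] using hx.2) hx.1
      rw [this, hf₀0]; exact one_ne_zero
  have hU : IsOpen {y : ℝ | f₀ y ≠ 0} := isOpen_compl_singleton.preimage hf₀c
  obtain ⟨ε₁, hε₁pos, hb₁⟩ := Metric.isOpen_iff.mp hU 0 (by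
    simp only [mem_setOf_eq, hf₀0]; exact one_ne_zero)
  obtain ⟨ε₂, hε₂pos, hb₂⟩ := Metric.isOpen_iff.mp hU d' (hS d' ⟨hd'0, le_rfl⟩)
  set ε : ℝ := min ε₁ ε₂ with hεdef
  have hεpos : 0 < ε := lt_min hε₁pos hε₂pos
  set a : ℝ := -(ε/2) with hadef
  set b : ℝ := d' + ε/2 with hbdef
  have haneg : a < 0 := by simp [hadef]; linarith
  have hbpos : 0 < b := by simp [hbdef]; nlinarith
  have hab : a ≤ b := by linarith
  have hne : ∀ x ∈ Icc a b, f₀ x ≠ 0 := by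
    intro x hx
    rcases lt_or_ge x 0 with h | h
    · apply hb₁
      rw [Metric.mem_ball, Real.dist_eq, sub_zero, abs_of_neg h]
      have : -x ≤ ε/2 := by have := hx.1; simp [hadef] at this; linarith
      have h2 : ε/2 < ε₁ := lt_of_lt_of_le (by linarith) (min_le_left _ _)
      linarith
    · rcases le_or_gt x d' with h2 | h2
      · exact hS x ⟨h, h2⟩
      · apply hb₂
        rw [Metric.mem_ball, Real.dist_eq, abs_of_pos (by linarith)]
        have : x ≤ d' + ε/2 := hx.2
        have h3 : ε/2 < ε₂ := lt_of_lt_of_le (by linarith) (min_le_right _ _)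
        linarith
  have h0K : (0:ℝ) ∈ Icc a b := ⟨haneg.le, hbpos.le⟩
  have h0O : (0:ℝ) ∈ Ioo a b := ⟨haneg, hbpos⟩
  have hIccsub : Icc 0 d ⊆ Ioo a b := by
    intro x hx
    constructor
    · linarith [hx.1]
    · have : x ≤ d' := le_trans hx.2 (le_max_left d 0)
      have : x ≤ d' := this
      simp only [hbdef]; linarith
  have hKsub : Icc 0 d ⊆ Icc a b := hIccsub.trans Ioo_subset_Icc_self
  have habs : ∀ x ∈ Icc a b, |x| ≤ b := by
    intro x hx
    rw [abs_le]
    refine ⟨le_trans ?_ hx.1, hx.2⟩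
    simp only [hadef, hbdef]; linarith
  -- bound M on f₀² and its inverse
  obtain ⟨M, hM⟩ := isCompact_Icc.exists_bound_of_continuousOn
    (f := fun x => max (f₀ x^2) (f₀ x^2)⁻¹)
    (((hf₀c.pow 2).continuousOn).sup
      (((hf₀c.pow 2).continuousOn).inv₀ fun x hx => pow_ne_zero 2 (hne x hx)))
  have hM1 : ∀ x ∈ Icc a b, f₀ x^2 ≤ M := by
    intro x hx
    exact le_trans (le_max_left _ _) (le_trans (le_abs_self _) (hM x hx))
  have hM2 : ∀ x ∈ Icc a b, (f₀ x^2)⁻¹ ≤ M := by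
    intro x hx
    exact le_trans (le_max_right _ _) (le_trans (le_abs_self _) (hM x hx))
  have hMnn : 0 ≤ M := le_trans (sq_nonneg (f₀ 0)) (hM1 0 h0K)
  have hgb : ∀ (k : ℕ), ∀ x ∈ Icc a b, |(f₀ x ^ 2) ^ ((-1:ℤ)^k)| ≤ M := by
    intro k x hx
    rcases Nat.even_or_odd k with he | ho
    · rw [he.neg_one_pow, zpow_one, abs_of_nonneg (sq_nonneg _)]
      exact hM1 x hx
    · rw [ho.neg_one_pow, zpow_neg_one, abs_of_nonneg (by positivity)]
      exact hM2 x hx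
  have hgc : ∀ (k : ℕ), ContinuousOn (fun s => (f₀ s ^ 2) ^ ((-1:ℤ)^k)) (Icc a b) := by
    intro k
    rcases Nat.even_or_odd k with he | ho
    · simp only [he.neg_one_pow, zpow_one]
      exact (hf₀c.pow 2).continuousOn
    · simp only [ho.neg_one_pow, zpow_neg_one]
      exact ((hf₀c.pow 2).continuousOn).inv₀ fun x hx => pow_ne_zero 2 (hne x hx)
  -- apply the recursion lemma
  have hXP := recAux a b M hab haneg.le hbpos.le
    (fun k s => (f₀ s ^ 2) ^ ((-1:ℤ)^k)) hgc hgb X hX0 (fun n hn x => hX n hn x)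
  have hXtP := recAux a b M hab haneg.le hbpos.le
    (fun k s => (f₀ s ^ 2) ^ ((-1:ℤ)^(k-1))) (fun k => hgc (k-1)) (fun k => hgb (k-1))
    Xt hXt0 (fun n hn x => hXt n hn x)
  -- the unified families P and R
  set P : ℕ → ℝ → ℝ := fun n x => if Odd n then X n x else Xt n x with hPdef
  set R : ℕ → ℝ → ℝ := fun n x => if Odd n then X (n-1) x else Xt (n-1) x with hRdef
  have hφP : ∀ n x, φ n x = f₀ x * P n x := by
    intro n x
    rw [hφ, hPdef]
    by_cases h : Odd n <;> simp [h]
  have hP0 : ∀ x, P 0 x = 1 := by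
    intro x; simp [hPdef, hXt0]
  set B' : ℝ := M * b + 1 with hB'def
  have hB'1 : (1:ℝ) ≤ B' := by nlinarith
  have hB'0 : (0:ℝ) ≤ B' := by linarith
  have hMb : ∀ (n : ℕ) (Y : ℕ → ℝ → ℝ),
      (∀ x ∈ Icc a b, |Y n x| ≤ M^n * |x|^n) → ∀ x ∈ Icc a b, |Y n x| ≤ B'^n := by
    intro n Y hYb x hx
    calc |Y n x| ≤ M^n * |x|^n := hYb x hx
      _ ≤ M^n * b^n := by
          exact mul_le_mul_of_nonneg_left (pow_le_pow_left₀ (abs_nonneg _) (habs x hx) n)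
            (pow_nonneg hMnn n)
      _ = (M*b)^n := (mul_pow M b n).symm
      _ ≤ B'^n := pow_le_pow_left₀ (by positivity) (by linarith) n
  have hPb : ∀ (n : ℕ), ∀ x ∈ Icc a b, |P n x| ≤ B'^n := by
    intro n x hx
    rw [hPdef]
    by_cases h : Odd n <;> simp only [h, if_true, if_false, reduceIte]
    · exact hMb n X (hXP n).2.1 x hx
    · exact hMb n Xt (hXtP n).2.1 x hx
  have hRb : ∀ (n : ℕ), ∀ x ∈ Icc a b, |R n x| ≤ B'^n := by
    intro n x hx
    have key : |R n x| ≤ B'^(n-1) := by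
      rw [hRdef]
      by_cases h : Odd n <;> simp only [h, if_true, if_false, reduceIte]
      · exact hMb (n-1) X (hXP (n-1)).2.1 x hx
      · exact hMb (n-1) Xt (hXtP (n-1)).2.1 x hx
    exact le_trans key (pow_le_pow_right₀ hB'1 (Nat.sub_le n 1))
  -- derivatives of P and R
  have hPd : ∀ (n : ℕ), ∀ x ∈ Ioo a b,
      HasDerivAt (P n) ((n:ℝ) * (R n x * (f₀ x^2)⁻¹)) x := by
    intro n x hx
    rcases Nat.even_or_odd n with he | ho
    · have h1 : ¬ Odd n := Nat.not_odd_iff_even.mpr he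
      have hfun : P n = Xt n := by funext y; simp [hPdef, h1]
      have hrv : R n x = Xt (n-1) x := by simp [hRdef, h1]
      rw [hfun, hrv]
      have hd := (hXtP n).2.2 x hx
      rcases Nat.eq_zero_or_pos n with rfl | hn
      · simpa using hd
      · have hodd : Odd (n-1) := Nat.Even.sub_odd hn he odd_one
        have hexp : ((-1:ℤ)^(n-1)) = -1 := hodd.neg_one_pow
        simpa [hexp, zpow_neg_one] using hd
    · have hfun : P n = X n := by funext y; simp [hPdef, ho]
      have hrv : R n x = X (n-1) x := by simp [hRdef, ho]
      rw [hfun, hrv]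
      have hd := (hXP n).2.2 x hx
      have hexp : ((-1:ℤ)^n) = -1 := ho.neg_one_pow
      simpa [hexp, zpow_neg_one] using hd
  have hRd : ∀ (n : ℕ), ∀ x ∈ Ioo a b,
      HasDerivAt (R n) (((n-1:ℕ):ℝ) * (P (n-2) x * f₀ x^2)) x := by
    intro n x hx
    match n with
    | 0 =>
      have hfun : R 0 = fun _ => (1:ℝ) := by funext y; simp [hRdef, hXt0]
      rw [hfun]
      simpa using hasDerivAt_const x (1:ℝ)
    | 1 =>
      have hfun : R 1 = fun _ => (1:ℝ) := by funext y; simp [hRdef, hX0]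
      rw [hfun]
      simpa using hasDerivAt_const x (1:ℝ)
    | (n+2) =>
      rcases Nat.even_or_odd n with he | ho
      · have h1 : ¬ Odd (n+2) := by
          exact Nat.not_odd_iff_even.mpr (he.add even_two)
        have hfun : R (n+2) = Xt (n+1) := by funext y; simp [hRdef, h1]
        have hpv : P n x = Xt n x := by simp [hPdef, Nat.not_odd_iff_even.mpr he]
        have hd := (hXtP (n+1)).2.2 x hx
        have hexp : ((-1:ℤ)^n) = 1 := he.neg_one_pow
        rw [hfun]
        simp only [Nat.add_sub_cancel, hpv]
        simpa [hexp, zpow_one] using hd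
      · have h1 : Odd (n+2) := by
          rcases ho with ⟨k, hk⟩; exact ⟨k+1, by omega⟩
        have hfun : R (n+2) = X (n+1) := by funext y; simp [hRdef, h1]
        have hpv : P n x = X n x := by simp [hPdef, ho]
        have hd := (hXP (n+1)).2.2 x hx
        have hexp : ((-1:ℤ)^(n+1)) = 1 := by
          have : Even (n+1) := Odd.add_one ho
          exact this.neg_one_pow
        rw [hfun]
        simp only [Nat.add_sub_cancel, hpv]
        simpa [hexp, zpow_one] using hd
  -- smoothness of f₀
  have hf₀diff : Differentiable ℝ f₀ := hf₀C2.differentiable (by norm_num)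
  have h2C : ContDiff ℝ 1 (deriv f₀) :=
    (contDiff_succ_iff_deriv.mp (by exact_mod_cast hf₀C2)).2.2
  have hf₀'diff : Differentiable ℝ (deriv f₀) := h2C.differentiable one_ne_zero
  have hf₀''cont : Continuous (deriv (deriv f₀)) := (contDiff_one_iff_deriv.mp h2C).2
  have hf₀'cont : Continuous (deriv f₀) := hf₀'diff.continuous
  -- φ and its derivatives
  set φ1 : ℕ → ℝ → ℝ :=
    fun n x => deriv f₀ x * P n x + f₀ x * ((n:ℝ) * (R n x * (f₀ x^2)⁻¹)) with hφ1def
  set φ2 : ℕ → ℝ → ℝ :=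
    fun n x => deriv (deriv f₀) x * P n x + (n:ℝ) * ((n-1:ℕ):ℝ) * (f₀ x * P (n-2) x)
    with hφ2def
  have hφd : ∀ (n : ℕ), ∀ x ∈ Ioo a b, HasDerivAt (φ n) (φ1 n x) x := by
    intro n x hx
    have h1 : HasDerivAt f₀ (deriv f₀ x) x := (hf₀diff x).hasDerivAt
    have hmul := h1.mul (hPd n x hx)
    exact hmul.congr_of_eventuallyEq (Eventually.of_forall fun y => hφP n y)
  have hφ1d : ∀ (n : ℕ), ∀ x ∈ Ioo a b, HasDerivAt (φ1 n) (φ2 n x) x := by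
    intro n x hx
    have hfx : f₀ x ≠ 0 := hne x (Ioo_subset_Icc_self hx)
    have h1 : HasDerivAt f₀ (deriv f₀ x) x := (hf₀diff x).hasDerivAt
    have h2 : HasDerivAt (deriv f₀) (deriv (deriv f₀) x) x := (hf₀'diff x).hasDerivAt
    have hsq : HasDerivAt (fun y => f₀ y ^ 2) (2 * f₀ x ^ 1 * deriv f₀ x) x := h1.pow 2
    have hinv := hsq.inv (pow_ne_zero 2 hfx)
    have hA := h2.mul (hPd n x hx)
    have hB := h1.mul (((hRd n x hx).mul hinv).const_mul (n:ℝ))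
    have hsum := hA.add hB
    have heq : deriv (deriv f₀) x * P n x + deriv f₀ x * ((n:ℝ) * (R n x * (f₀ x^2)⁻¹))
        + (deriv f₀ x * ((n:ℝ) * (R n x * (f₀ x^2)⁻¹))
          + f₀ x * ((n:ℝ) * ((((n-1:ℕ):ℝ) * (P (n-2) x * f₀ x^2)) * (f₀ x^2)⁻¹
            + R n x * (-(2 * f₀ x ^ 1 * deriv f₀ x) / (f₀ x^2)^2))))
        = φ2 n x := by
      rw [hφ2def]
      field_simp
      ring
    exact hsum.congr_deriv heq
  -- bounds on f₀ and its derivatives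
  obtain ⟨F, hF⟩ := isCompact_Icc.exists_bound_of_continuousOn hf₀c.continuousOn
  obtain ⟨F1, hF1⟩ := isCompact_Icc.exists_bound_of_continuousOn hf₀'cont.continuousOn
  obtain ⟨F2, hF2⟩ := isCompact_Icc.exists_bound_of_continuousOn hf₀''cont.continuousOn
  have hFnn : 0 ≤ F := le_trans (norm_nonneg _) (hF 0 h0K)
  have hF1nn : 0 ≤ F1 := le_trans (norm_nonneg _) (hF1 0 h0K)
  have hF2nn : 0 ≤ F2 := le_trans (norm_nonneg _) (hF2 0 h0K)
  have hFa : ∀ x ∈ Icc a b, |f₀ x| ≤ F := fun x hx => hF x hx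
  have hF1a : ∀ x ∈ Icc a b, |deriv f₀ x| ≤ F1 := fun x hx => hF1 x hx
  have hF2a : ∀ x ∈ Icc a b, |deriv (deriv f₀) x| ≤ F2 := fun x hx => hF2 x hx
  -- pointwise bounds on φ, φ1, φ2
  have hφb : ∀ (n : ℕ), ∀ x ∈ Icc a b, |φ n x| ≤ F * B'^n := by
    intro n x hx
    rw [hφP, abs_mul]
    exact mul_le_mul (hFa x hx) (hPb n x hx) (abs_nonneg _) hFnn
  have hB'p : ∀ (n : ℕ), (0:ℝ) ≤ B'^n := fun n => pow_nonneg hB'0 n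
  have hφ1b : ∀ (n : ℕ), ∀ x ∈ Icc a b, |φ1 n x| ≤ (F1 + F*M) * (2:ℝ)^n * B'^n := by
    intro n x hx
    have hfb : |f₀ x| ≤ F := hFa x hx
    have hinvb : |(f₀ x^2)⁻¹| ≤ M := by
      rw [abs_of_nonneg (by positivity)]; exact hM2 x hx
    have h1 : |φ1 n x| ≤ F1 * B'^n + F * ((n:ℝ) * (B'^n * M)) := by
      refine le_trans (abs_add_le _ _) (add_le_add ?_ ?_)
      · rw [abs_mul]
        exact mul_le_mul (hF1a x hx) (hPb n x hx) (abs_nonneg _) hF1nn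
      · rw [abs_mul, abs_mul, abs_mul, Nat.abs_cast]
        exact mul_le_mul hfb (mul_le_mul_of_nonneg_left
          (mul_le_mul (hRb n x hx) hinvb (abs_nonneg _) (hB'p n))
          (Nat.cast_nonneg n)) (by positivity) hFnn
    refine h1.trans ?_
    have hmid : F1 * B'^n + F * ((n:ℝ) * (B'^n * M)) ≤ (F1 + F*M) * ((n:ℝ)+1) * B'^n := by
      nlinarith [hB'p n, Nat.cast_nonneg (α := ℝ) n, mul_nonneg hFnn hMnn,
        mul_nonneg (mul_nonneg hFnn hMnn) (hB'p n), mul_nonneg hF1nn (hB'p n)]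
    refine hmid.trans ?_
    have hn2 : ((n:ℝ)+1) ≤ (2:ℝ)^n := by
      have h' : (n+1 : ℕ) ≤ 2^n := Nat.succ_le_of_lt (Nat.lt_two_pow_self (n := n))
      exact_mod_cast h'
    have hC1nn : (0:ℝ) ≤ F1 + F*M := by positivity
    exact mul_le_mul_of_nonneg_right (mul_le_mul_of_nonneg_left hn2 hC1nn) (hB'p n)
  have hφ2b : ∀ (n : ℕ), ∀ x ∈ Icc a b, |φ2 n x| ≤ (F2 + F) * (4:ℝ)^n * B'^n := by
    intro n x hx
    have hnn4 : ((n:ℝ) * ((n-1:ℕ):ℝ)) ≤ (4:ℝ)^n := by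
      have h1 : n * (n-1) ≤ 4^n := by
        calc n * (n-1) ≤ 2^n * 2^n :=
              Nat.mul_le_mul (Nat.lt_two_pow_self (n := n)).le
                (le_trans (Nat.sub_le n 1) (Nat.lt_two_pow_self (n := n)).le)
          _ = 4^n := by rw [← Nat.mul_pow]
      exact_mod_cast h1
    have hp2 : |P (n-2) x| ≤ B'^n :=
      le_trans (hPb (n-2) x hx) (pow_le_pow_right₀ hB'1 (Nat.sub_le n 2))
    have h1 : |φ2 n x| ≤ F2 * B'^n + (4:ℝ)^n * (F * B'^n) := by
      refine le_trans (abs_add_le _ _) (add_le_add ?_ ?_)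
      · rw [abs_mul]
        exact mul_le_mul (hF2a x hx) (hPb n x hx) (abs_nonneg _) hF2nn
      · rw [abs_mul]
        refine mul_le_mul ?_ ?_ (abs_nonneg _) (by positivity)
        · rw [abs_mul, Nat.abs_cast, Nat.abs_cast]; exact hnn4
        · rw [abs_mul]; exact mul_le_mul (hFa x hx) hp2 (abs_nonneg _) hFnn
    refine h1.trans ?_
    have h4 : (1:ℝ) ≤ (4:ℝ)^n := one_le_pow₀ (by norm_num)
    have e1 : B'^n ≤ (4:ℝ)^n * B'^n := le_mul_of_one_le_left (hB'p n) h4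
    calc F2 * B'^n + (4:ℝ)^n * (F * B'^n)
        ≤ F2 * ((4:ℝ)^n * B'^n) + (4:ℝ)^n * (F * B'^n) :=
          add_le_add (mul_le_mul_of_nonneg_left e1 hF2nn) le_rfl
      _ = (F2 + F) * (4:ℝ)^n * B'^n := by ring
  -- norm computations and summable majorants
  set W : ℝ := ‖ω‖ + 1 with hWdef
  have hωW : ‖ω‖ ≤ W := le_add_of_nonneg_right zero_le_one
  have hWnn : (0:ℝ) ≤ W := le_trans (norm_nonneg _) hωW
  have hcnorm : ∀ (n : ℕ) (r : ℝ),
      ‖(-(Complex.I * ω))^n * ((r : ℝ) : ℂ) / ((n.factorial : ℕ) : ℂ)‖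
        = ‖ω‖^n * |r| / (n.factorial : ℝ) := by
    intro n r
    rw [norm_div, norm_mul, norm_pow, norm_neg, norm_mul, Complex.norm_I, one_mul,
      Complex.norm_natCast, Complex.norm_real, Real.norm_eq_abs]
  have hsummaj : ∀ (C r : ℝ), Summable (fun n : ℕ => C * (r^n / n.factorial)) :=
    fun C r => (Real.summable_pow_div_factorial r).mul_left C
  have hfac_pos : ∀ n : ℕ, (0:ℝ) < (n.factorial : ℝ) := fun n => by
    exact_mod_cast n.factorial_pos
  have hgen : ∀ (C r : ℝ) (ψ : ℕ → ℝ → ℝ), 0 ≤ C → 0 ≤ r →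
      (∀ n, ∀ x ∈ Icc a b, |ψ n x| ≤ C * r^n * B'^n) →
      ∀ (n : ℕ), ∀ x ∈ Icc a b,
        ‖(-(Complex.I * ω))^n * ((ψ n x : ℝ) : ℂ) / ((n.factorial : ℕ) : ℂ)‖
          ≤ C * ((r*(B'*W))^n / n.factorial) := by
    intro C r ψ hC hr hψ n x hx
    rw [hcnorm]
    have key : ‖ω‖^n * |ψ n x| ≤ C * (r*(B'*W))^n := by
      calc ‖ω‖^n * |ψ n x| ≤ W^n * (C * r^n * B'^n) :=
            mul_le_mul (pow_le_pow_left₀ (norm_nonneg _) hωW n) (hψ n x hx) (abs_nonneg _)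
              (by positivity)
        _ = C * (r*(B'*W))^n := by rw [mul_pow, mul_pow]; ring
    rw [← mul_div_assoc]
    exact (div_le_div_iff_of_pos_right (hfac_pos n)).mpr key
  have hb0' := hgen F 1 φ hFnn zero_le_one
    (fun n x hx => by simpa using hφb n x hx)
  have hb1' := hgen (F1 + F*M) 2 φ1 (by positivity) (by norm_num) hφ1b
  have hb2' := hgen (F2 + F) 4 φ2 (by positivity) (by norm_num) hφ2b
  have hψ3b : ∀ (n : ℕ), ∀ x ∈ Icc a b,
      |(n:ℝ) * ((n-1:ℕ):ℝ) * φ (n-2) x| ≤ F * (4:ℝ)^n * B'^n := by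
    intro n x hx
    have hnn4 : ((n:ℝ) * ((n-1:ℕ):ℝ)) ≤ (4:ℝ)^n := by
      have h1 : n * (n-1) ≤ 4^n := by
        calc n * (n-1) ≤ 2^n * 2^n :=
              Nat.mul_le_mul (Nat.lt_two_pow_self (n := n)).le
                (le_trans (Nat.sub_le n 1) (Nat.lt_two_pow_self (n := n)).le)
          _ = 4^n := by rw [← Nat.mul_pow]
      exact_mod_cast h1
    have hp2 : |φ (n-2) x| ≤ F * B'^n :=
      le_trans (hφb (n-2) x hx)
        (mul_le_mul_of_nonneg_left (pow_le_pow_right₀ hB'1 (Nat.sub_le n 2)) hFnn)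
    calc |(n:ℝ) * ((n-1:ℕ):ℝ) * φ (n-2) x|
        = |(n:ℝ) * ((n-1:ℕ):ℝ)| * |φ (n-2) x| := abs_mul _ _
      _ ≤ (4:ℝ)^n * (F * B'^n) := by
          refine mul_le_mul ?_ hp2 (abs_nonneg _) (by positivity)
          rw [abs_mul, Nat.abs_cast, Nat.abs_cast]; exact hnn4
      _ = F * (4:ℝ)^n * B'^n := by ring
  have hb3' := hgen F 4 (fun n x => (n:ℝ) * ((n-1:ℕ):ℝ) * φ (n-2) x) hFnn (by norm_num) hψ3b
  -- summability of the series and of its term values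
  have hsumφ : ∀ x ∈ Icc a b,
      Summable (fun n : ℕ => (-(Complex.I * ω))^n * ((φ n x : ℝ) : ℂ) / (n.factorial : ℂ)) := by
    intro x hx
    exact Summable.of_norm_bounded (hsummaj F (1*(B'*W))) (fun n => hb0' n x hx)
  have hsumφ1 : ∀ x ∈ Icc a b,
      Summable (fun n : ℕ => (-(Complex.I * ω))^n * ((φ1 n x : ℝ) : ℂ) / (n.factorial : ℂ)) := by
    intro x hx
    exact Summable.of_norm_bounded (hsummaj (F1+F*M) (2*(B'*W))) (fun n => hb1' n x hx)
  -- the derivative of u on Ioo a b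
  have hgd : ∀ (n : ℕ), ∀ y ∈ Ioo a b,
      HasDerivAt (fun z => (-(Complex.I * ω))^n * ((φ n z : ℝ) : ℂ) / (n.factorial : ℂ))
        ((-(Complex.I * ω))^n * ((φ1 n y : ℝ) : ℂ) / (n.factorial : ℂ)) y := by
    intro n y hy
    exact (((hφd n y hy).ofReal_comp).const_mul ((-(Complex.I * ω))^n)).div_const _
  have hud : ∀ y ∈ Ioo a b, HasDerivAt u
      (∑' n : ℕ, (-(Complex.I * ω))^n * ((φ1 n y : ℝ) : ℂ) / (n.factorial : ℂ)) y := by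
    intro y hy
    have hder := hasDerivAt_tsum_of_isPreconnected
      (u := fun n : ℕ => (F1+F*M) * ((2*(B'*W))^n / n.factorial))
      (g := fun (n : ℕ) z => (-(Complex.I * ω))^n * ((φ n z : ℝ) : ℂ) / (n.factorial : ℂ))
      (g' := fun (n : ℕ) y => (-(Complex.I * ω))^n * ((φ1 n y : ℝ) : ℂ) / (n.factorial : ℂ))
      (hsummaj (F1+F*M) (2*(B'*W)))
      isOpen_Ioo isPreconnected_Ioo hgd
      (fun n z hz => hb1' n z (Ioo_subset_Icc_self hz)) h0O (hsumφ 0 h0K) hy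
    exact hder.congr_of_eventuallyEq (Eventually.of_forall fun z => hu z)
  -- values at 0
  have hXzero : ∀ k : ℕ, 1 ≤ k → X k 0 = 0 := fun k hk => by
    rw [hX k hk 0, intervalIntegral.integral_same, mul_zero]
  have hXtzero : ∀ k : ℕ, 1 ≤ k → Xt k 0 = 0 := fun k hk => by
    rw [hXt k hk 0, intervalIntegral.integral_same, mul_zero]
  have hP0' : ∀ n : ℕ, 1 ≤ n → P n 0 = 0 := by
    intro n hn
    by_cases h : Odd n <;> simp [hPdef, h, hXzero n hn, hXtzero n hn]
  have hR0' : ∀ n : ℕ, 2 ≤ n → R n 0 = 0 := by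
    intro n hn
    have h1 : 1 ≤ n - 1 := by omega
    by_cases h : Odd n <;> simp [hRdef, h, hXzero _ h1, hXtzero _ h1]
  refine ⟨?_, ?_, ?_, ?_⟩
  · -- uniform convergence
    have h1 := tendstoUniformlyOn_tsum_nat (hsummaj F (1*(B'*W)))
      (fun n x hx => hb0' n x (hKsub hx))
    have hfun : (fun x => ∑' n : ℕ,
        (-(Complex.I * ω))^n * ((φ n x : ℝ) : ℂ) / (n.factorial : ℂ)) = u :=
      funext fun x => (hu x).symm
    exact hfun ▸ h1
  · -- the differential equation
    intro x hx
    have hxO : x ∈ Ioo a b := hIccsub hx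
    have hxK : x ∈ Icc a b := hKsub hx
    have hVd : HasDerivAt
        (fun y => ∑' n : ℕ, (-(Complex.I * ω))^n * ((φ1 n y : ℝ) : ℂ) / (n.factorial : ℂ))
        (∑' n : ℕ, (-(Complex.I * ω))^n * ((φ2 n x : ℝ) : ℂ) / (n.factorial : ℂ)) x := by
      exact hasDerivAt_tsum_of_isPreconnected
        (u := fun n : ℕ => (F2+F) * ((4*(B'*W))^n / n.factorial))
        (g := fun (n : ℕ) z => (-(Complex.I * ω))^n * ((φ1 n z : ℝ) : ℂ) / (n.factorial : ℂ))
        (g' := fun (n : ℕ) y => (-(Complex.I * ω))^n * ((φ2 n y : ℝ) : ℂ) / (n.factorial : ℂ))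
        (hsummaj (F2+F) (4*(B'*W))) isOpen_Ioo isPreconnected_Ioo
        (fun n y hy => (((hφ1d n y hy).ofReal_comp).const_mul ((-(Complex.I * ω))^n)).div_const _)
        (fun n z hz => hb2' n z (Ioo_subset_Icc_self hz)) h0O (hsumφ1 0 h0K) hxO
    have hEq : deriv u =ᶠ[𝓝 x]
        (fun y => ∑' n : ℕ, (-(Complex.I * ω))^n * ((φ1 n y : ℝ) : ℂ) / (n.factorial : ℂ)) :=
      eventuallyEq_of_mem (isOpen_Ioo.mem_nhds hxO) (fun y hy => (hud y hy).deriv)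
    have hdd : deriv (deriv u) x
        = ∑' n : ℕ, (-(Complex.I * ω))^n * ((φ2 n x : ℝ) : ℂ) / (n.factorial : ℂ) := by
      rw [hEq.deriv_eq, hVd.deriv]
    have hterm : ∀ n : ℕ, (-(Complex.I * ω))^n * ((φ2 n x : ℝ) : ℂ) / (n.factorial : ℂ)
        = (q x : ℂ) * ((-(Complex.I * ω))^n * ((φ n x : ℝ) : ℂ) / (n.factorial : ℂ))
          + (-(Complex.I * ω))^n * (((n:ℝ) * ((n-1:ℕ):ℝ) * φ (n-2) x : ℝ) : ℂ)
            / (n.factorial : ℂ) := by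
      intro n
      have h1 : φ2 n x = q x * φ n x + (n:ℝ) * ((n-1:ℕ):ℝ) * φ (n-2) x := by
        simp only [hφ2def]
        rw [hode x hx, hφP n x, hφP (n-2) x]; ring
      rw [h1]; push_cast; ring
    have hs1 : Summable (fun n : ℕ =>
        (q x : ℂ) * ((-(Complex.I * ω))^n * ((φ n x : ℝ) : ℂ) / (n.factorial : ℂ))) :=
      (hsumφ x hxK).mul_left _
    have hs2 : Summable (fun n : ℕ =>
        (-(Complex.I * ω))^n * (((n:ℝ) * ((n-1:ℕ):ℝ) * φ (n-2) x : ℝ) : ℂ)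
          / (n.factorial : ℂ)) :=
      Summable.of_norm_bounded (hsummaj F (4*(B'*W))) (fun n => hb3' n x hxK)
    have hsplit : (∑' n : ℕ, (-(Complex.I * ω))^n * ((φ2 n x : ℝ) : ℂ) / (n.factorial : ℂ))
        = (q x : ℂ) * u x
          + ∑' n : ℕ, (-(Complex.I * ω))^n * (((n:ℝ) * ((n-1:ℕ):ℝ) * φ (n-2) x : ℝ) : ℂ)
            / (n.factorial : ℂ) := by
      rw [tsum_congr hterm, Summable.tsum_add hs1 hs2, tsum_mul_left, ← hu x]
    have hs2' : Summable (fun n : ℕ =>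
        (-(Complex.I * ω))^(n+1) * ((((n+1:ℕ):ℕ):ℝ) * (((n+1)-1:ℕ):ℝ) * φ ((n+1)-2) x : ℝ)
          / ((n+1).factorial : ℂ)) := by
      exact (summable_nat_add_iff 1).mpr hs2
    have htail : (∑' n : ℕ, (-(Complex.I * ω))^n
          * (((n:ℝ) * ((n-1:ℕ):ℝ) * φ (n-2) x : ℝ) : ℂ) / (n.factorial : ℂ))
        = (-(Complex.I * ω))^2 * u x := by
      rw [Summable.tsum_eq_zero_add hs2]
      rw [Summable.tsum_eq_zero_add hs2']
      have hz0 : (-(Complex.I * ω))^(0:ℕ)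
          * ((((0:ℕ):ℝ) * (((0:ℕ)-1:ℕ):ℝ) * φ ((0:ℕ)-2) x : ℝ) : ℂ)
          / ((0:ℕ).factorial : ℂ) = 0 := by push_cast; simp
      have hz1 : (-(Complex.I * ω))^(0+1:ℕ)
          * ((((0+1:ℕ):ℝ) * (((0+1:ℕ)-1:ℕ):ℝ) * φ ((0+1:ℕ)-2) x : ℝ) : ℂ)
          / ((0+1:ℕ).factorial : ℂ) = 0 := by norm_num
      rw [hz0, hz1, zero_add, zero_add]
      have hshift : ∀ n : ℕ, (-(Complex.I * ω))^(n+1+1)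
          * ((((n+1+1:ℕ):ℝ) * (((n+1+1:ℕ)-1:ℕ):ℝ) * φ ((n+1+1:ℕ)-2) x : ℝ) : ℂ)
          / ((n+1+1:ℕ).factorial : ℂ)
          = (-(Complex.I * ω))^2
            * ((-(Complex.I * ω))^n * ((φ n x : ℝ) : ℂ) / (n.factorial : ℂ)) := by
        intro n
        have hsub1 : ((n+1+1:ℕ)-1:ℕ) = n+1 := rfl
        have hsub2 : ((n+1+1:ℕ)-2:ℕ) = n := rfl
        have hfne : ((n.factorial : ℕ) : ℂ) ≠ 0 := by
          exact_mod_cast n.factorial_ne_zero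
        have hfac : (((n+1+1).factorial : ℕ) : ℂ)
            = ((n:ℂ)+2) * ((n:ℂ)+1) * ((n.factorial : ℕ) : ℂ) := by
          rw [show (n+1+1) = n+2 from rfl]
          rw [Nat.factorial_succ, Nat.factorial_succ]
          push_cast; ring
        rw [hsub1, hsub2, hfac]
        have h2 : ((n:ℂ)+2) ≠ 0 := by
          intro h; have := congrArg Complex.re h; simp at this; linarith [Nat.cast_nonneg (α := ℝ) n]
        have h1 : ((n:ℂ)+1) ≠ 0 := by
          intro h; have := congrArg Complex.re h; simp at this; linarith [Nat.cast_nonneg (α := ℝ) n]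
        push_cast
        field_simp
        ring
      rw [tsum_congr hshift, tsum_mul_left, ← hu x]
    have hI2 : (-(Complex.I * ω))^2 = -(ω^2) := by
      rw [neg_pow, mul_pow, Complex.I_sq]; ring
    rw [hdd, hsplit, htail, hI2]
    ring
  · -- u 0 = 1
    rw [hu 0]
    rw [tsum_eq_single 0 ?_]
    · have hφ00 : φ 0 0 = 1 := by simp [hφ, hXt0, hf₀0]
      rw [hφ00]; simp
    · intro n hn
      have h1 : 1 ≤ n := Nat.one_le_iff_ne_zero.mpr hn
      have hz : φ n 0 = 0 := by rw [hφP n 0, hP0' n h1, mul_zero]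
      rw [hz]; simp
  · -- deriv u 0
    rw [(hud 0 h0O).deriv]
    rw [tsum_eq_single 1 ?_]
    · have hφ11 : φ1 1 0 = 1 := by
        have hR1 : R 1 0 = 1 := by simp [hRdef, hX0]
        simp [hφ1def, hR1, hf₀'0, hf₀0]
      rw [hφ11]; simp
    · intro n hn
      match n, hn with
      | 0, _ =>
        have hz : φ1 0 0 = 0 := by simp [hφ1def, hf₀'0]
        rw [hz]; simp
      | 1, h => exact absurd rfl h
      | (m+2), _ =>
        have hR : R (m+2) 0 = 0 := hR0' (m+2) (by omega)
        have hz : φ1 (m+2) 0 = 0 := by simp [hφ1def, hf₀'0, hR]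
        rw [hz]; simp
end

section
/- Let q be continuous on [0,d], and let φ_n denote the formal powers associated with a nonvanishing solution f₀ of f''=qf with f₀(0)=1, f₀'(0)=0. Then there exists a constant c (depending on f₀ and d) such that |φ_n(x)| ≤ c·max(1, f₀(x)·max_{[0,x]}|1/f₀|)·x^n for all x ∈ [0,d] and all n ≥ 0; in particular the SPPS series Σ (-iω)^n φ_n(x)/n! converges absolutely and uniformly on [0,d]×K for any compact K ⊂ ℂ. -/
open MeasureTheory Set Filter Topology

private lemma aux_bound (d : ℝ) (hd : 0 ≤ d) (G : ℝ → ℝ)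
    (hG : ContinuousOn G (Icc 0 d))
    (hGpos : ∀ x ∈ Icc (0:ℝ) d, 0 < G x) (M : ℝ) (hM : 0 ≤ M)
    (key : ∀ s ∈ Icc (0:ℝ) d, ∀ t ∈ Icc (0:ℝ) d, s ≤ t →
      G s ≤ G t * Real.exp (M * (t - s)) ∧ G t ≤ G s * Real.exp (M * (t - s)))
    (Y : ℕ → ℝ → ℝ) (hY0 : ∀ x, Y 0 x = 1)
    (hYrec : ∀ n : ℕ, ∀ x : ℝ, Y (n + 1) x
      = ((n : ℝ) + 1) * ∫ s in (0:ℝ)..x, Y n s * (if Even n then G s else (G s)⁻¹)) :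
    ∀ n, ContinuousOn (Y n) (Icc 0 d) ∧ ∀ x ∈ Icc (0:ℝ) d,
      |Y n x| ≤ (if Even n then Real.exp (M * x) else Real.exp (M * x) * G x) * x ^ n := by
  intro n
  induction n with
  | zero =>
      constructor
      · have : Y 0 = fun _ => (1:ℝ) := funext hY0
        rw [this]; exact continuousOn_const
      · intro x hx
        have h1 : (0:ℝ) ≤ M * x := mul_nonneg hM hx.1
        simp only [Even.zero, if_pos, pow_zero, mul_one, hY0, abs_one]
        exact Real.one_le_exp h1
  | succ n ih =>
      obtain ⟨ihc, ihb⟩ := ih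
      set g : ℝ → ℝ := fun s => Y n s * (if Even n then G s else (G s)⁻¹) with hg
      have hgc : ContinuousOn g (Icc 0 d) := by
        by_cases hn : Even n
        · simp only [hg, if_pos hn]; exact ihc.mul hG
        · simp only [hg, if_neg hn]
          exact ihc.mul (hG.inv₀ (fun x hx => (hGpos x hx).ne'))
      constructor
      · have h1 : IntegrableOn g (Set.uIcc 0 d) := by
          rw [Set.uIcc_of_le hd]; exact hgc.integrableOn_Icc
        have h2 : ContinuousOn (fun x => ((n:ℝ)+1) * ∫ s in (0:ℝ)..x, g s) (Icc 0 d) := by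
          rw [← Set.uIcc_of_le hd]
          exact continuousOn_const.mul
            (intervalIntegral.continuousOn_primitive_interval h1)
        exact h2.congr (fun x hx => hYrec n x)
      · intro x hx
        obtain ⟨hx0, hxd⟩ := hx
        have hsub : Icc (0:ℝ) x ⊆ Icc 0 d := Icc_subset_Icc_right hxd
        -- coefficient for step n+1
        set C : ℝ := (if Even n then Real.exp (M*x) * G x else Real.exp (M*x)) with hC
        have hCpos : 0 < C := by
          by_cases hn : Even n
          · simp only [hC, if_pos hn]
            exact mul_pos (Real.exp_pos _) (hGpos x ⟨hx0, hxd⟩)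
          · simp only [hC, if_neg hn]; exact Real.exp_pos _
        have hpt : ∀ s ∈ Icc (0:ℝ) x, |g s| ≤ C * s ^ n := by
          intro s hs
          have hs' : s ∈ Icc (0:ℝ) d := hsub hs
          have hexp : Real.exp (M * s) * Real.exp (M * (x - s)) = Real.exp (M * x) := by
            rw [← Real.exp_add]; ring_nf
          have hGs : 0 < G s := hGpos s hs'
          by_cases hn : Even n
          · have hYb : |Y n s| ≤ Real.exp (M * s) * s ^ n := by
              have := ihb s hs'; rwa [if_pos hn] at this
            have hgs : g s = Y n s * G s := by simp only [hg, if_pos hn]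
            have h2 : G s ≤ G x * Real.exp (M * (x - s)) :=
              (key s hs' x ⟨hx0, hxd⟩ hs.2).1
            calc |g s| = |Y n s| * G s := by
                  rw [hgs, abs_mul, abs_of_pos hGs]
              _ ≤ (Real.exp (M*s) * s ^ n) * G s :=
                  mul_le_mul_of_nonneg_right hYb hGs.le
              _ = (Real.exp (M*s) * G s) * s ^ n := by ring
              _ ≤ (Real.exp (M*s) * (G x * Real.exp (M * (x - s)))) * s ^ n :=
                  mul_le_mul_of_nonneg_right
                    (mul_le_mul_of_nonneg_left h2 (Real.exp_pos _).le)
                    (pow_nonneg hs.1 n)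
              _ = (Real.exp (M*s) * Real.exp (M*(x-s))) * (G x * s ^ n) := by ring
              _ = Real.exp (M*x) * (G x * s ^ n) := by rw [hexp]
              _ = C * s ^ n := by rw [hC, if_pos hn]; ring
          · have hYb : |Y n s| ≤ Real.exp (M * s) * G s * s ^ n := by
              have := ihb s hs'; rwa [if_neg hn] at this
            have hgs : g s = Y n s * (G s)⁻¹ := by simp only [hg, if_neg hn]
            have h3 : Real.exp (M*s) ≤ Real.exp (M*x) :=
              Real.exp_le_exp.mpr (mul_le_mul_of_nonneg_left hs.2 hM)
            calc |g s| = |Y n s| * (G s)⁻¹ := by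
                  rw [hgs, abs_mul, abs_of_pos (inv_pos.mpr hGs)]
              _ ≤ (Real.exp (M*s) * G s * s ^ n) * (G s)⁻¹ :=
                  mul_le_mul_of_nonneg_right hYb (inv_pos.mpr hGs).le
              _ = Real.exp (M*s) * s ^ n := by
                  field_simp
                  try ring
              _ ≤ Real.exp (M*x) * s ^ n :=
                  mul_le_mul_of_nonneg_right h3 (pow_nonneg hs.1 n)
              _ = C * s ^ n := by rw [hC, if_neg hn]
        have hint1 : IntervalIntegrable (fun s => |g s|) volume 0 x := by
          have : ContinuousOn (fun s => |g s|) (Set.uIcc 0 x) := by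
            rw [Set.uIcc_of_le hx0]; exact (hgc.mono hsub).abs
          exact this.intervalIntegrable
        have hint2 : IntervalIntegrable (fun s => C * s ^ n) volume 0 x :=
          (continuous_const.mul (continuous_pow n)).intervalIntegrable 0 x
        have habs : |∫ s in (0:ℝ)..x, g s| ≤ ∫ s in (0:ℝ)..x, |g s| := by
          simpa [Real.norm_eq_abs] using
            intervalIntegral.norm_integral_le_integral_norm (f := g) (μ := volume) hx0
        have hmono : (∫ s in (0:ℝ)..x, |g s|) ≤ ∫ s in (0:ℝ)..x, C * s ^ n :=
          intervalIntegral.integral_mono_on hx0 hint1 hint2 hpt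
        have hval : (∫ s in (0:ℝ)..x, C * s ^ n) = C * (x ^ (n+1) / ((n:ℝ)+1)) := by
          rw [intervalIntegral.integral_const_mul, integral_pow]
          norm_num
        have hcast : (0:ℝ) < (n:ℝ) + 1 := by positivity
        have final : |Y (n+1) x| ≤ C * x ^ (n+1) := by
          rw [hYrec n x, abs_mul, abs_of_pos hcast]
          calc ((n:ℝ)+1) * |∫ s in (0:ℝ)..x, g s|
              ≤ ((n:ℝ)+1) * ∫ s in (0:ℝ)..x, C * s ^ n :=
                mul_le_mul_of_nonneg_left (habs.trans hmono) hcast.le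
            _ = C * x ^ (n+1) := by rw [hval]; field_simp
        have hiff : Even (n+1) ↔ ¬ Even n := Nat.even_add_one
        by_cases hn : Even n
        · rw [if_neg (by rw [hiff]; exact not_not_intro hn)]
          simpa [hC, if_pos hn] using final
        · rw [if_pos (hiff.mpr hn)]
          simpa [hC, if_neg hn] using final

theorem formal_powers_bound_and_convergence (d : ℝ) (q f₀ : ℝ → ℝ)
    (hq : ContinuousOn q (Icc 0 d))
    (hf₀C2 : ContDiff ℝ 2 f₀)
    (hode : ∀ x ∈ Icc 0 d, deriv (deriv f₀) x = q x * f₀ x)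
    (hf₀0 : f₀ 0 = 1) (hf₀'0 : deriv f₀ 0 = 0)
    (hf₀ne : ∀ x ∈ Icc 0 d, f₀ x ≠ 0)
    (X Xt : ℕ → ℝ → ℝ)
    (hX0 : ∀ x, X 0 x = 1)
    (hXt0 : ∀ x, Xt 0 x = 1)
    (hX : ∀ n : ℕ, 1 ≤ n → ∀ x,
      X n x = n * ∫ s in (0:ℝ)..x, X (n - 1) s * (f₀ s ^ 2) ^ ((-1 : ℤ) ^ n))
    (hXt : ∀ n : ℕ, 1 ≤ n → ∀ x,
      Xt n x = n * ∫ s in (0:ℝ)..x, Xt (n - 1) s * (f₀ s ^ 2) ^ ((-1 : ℤ) ^ (n - 1)))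
    (φ : ℕ → ℝ → ℝ)
    (hφ : ∀ k x, φ k x = if Odd k then f₀ x * X k x else f₀ x * Xt k x) :
    ∃ c : ℝ,
      (∀ x ∈ Icc 0 d, ∀ n : ℕ,
        |φ n x| ≤ c * max 1 (f₀ x * sSup ((fun s => |1 / f₀ s|) '' Icc 0 x)) * x ^ n) ∧
      (∀ K : Set ℂ, IsCompact K →
        (∀ x ∈ Icc 0 d, ∀ ω ∈ K,
          Summable fun n : ℕ =>
            ‖(-(Complex.I * ω)) ^ n * (φ n x : ℂ) / (Nat.factorial n)‖) ∧
        TendstoUniformlyOn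
          (fun N (p : ℝ × ℂ) => ∑ n ∈ Finset.range N,
            (-(Complex.I * p.2)) ^ n * (φ n p.1 : ℂ) / (Nat.factorial n))
          (fun p => ∑' n : ℕ,
            (-(Complex.I * p.2)) ^ n * (φ n p.1 : ℂ) / (Nat.factorial n))
          atTop (Icc 0 d ×ˢ K)) := by
  rcases lt_or_ge d 0 with hd' | hd
  · -- degenerate case : Icc 0 d = ∅
    have hempty : Icc (0:ℝ) d = ∅ := Icc_eq_empty (by linarith)
    refine ⟨0, ?_, ?_⟩
    · intro x hx; rw [hempty] at hx; exact absurd hx (notMem_empty x)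
    · intro K hK
      constructor
      · intro x hx; rw [hempty] at hx; exact absurd hx (notMem_empty x)
      · have : Icc (0:ℝ) d ×ˢ K = ∅ := by rw [hempty, Set.empty_prod]
        rw [this]; exact tendstoUniformlyOn_empty
  -- main case
  have h0mem : (0:ℝ) ∈ Icc (0:ℝ) d := left_mem_Icc.mpr hd
  have hf₀cont : Continuous f₀ := hf₀C2.continuous
  -- positivity of f₀ on [0, d]
  have hpos : ∀ x ∈ Icc (0:ℝ) d, 0 < f₀ x := by
    intro x hx
    rcases lt_or_ge 0 (f₀ x) with h | h
    · exact h
    · exfalso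
      have hsub : Icc (0:ℝ) x ⊆ Icc 0 d := Icc_subset_Icc_right hx.2
      have hiv : Icc (f₀ x) (f₀ 0) ⊆ f₀ '' (Icc 0 x) :=
        intermediate_value_Icc' hx.1 (hf₀cont.continuousOn)
      have h0 : (0:ℝ) ∈ Icc (f₀ x) (f₀ 0) := by
        constructor
        · exact h
        · rw [hf₀0]; norm_num
      obtain ⟨c, hc, hc0⟩ := hiv h0
      exact hf₀ne c (hsub hc) hc0
  -- lower bound δ
  obtain ⟨x₀, hx₀, hmin⟩ := isCompact_Icc.exists_isMinOn ⟨0, h0mem⟩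
    hf₀cont.continuousOn
  set δ : ℝ := f₀ x₀ with hδdef
  have hδpos : 0 < δ := hpos x₀ hx₀
  have hδ : ∀ x ∈ Icc (0:ℝ) d, δ ≤ f₀ x := fun x hx => hmin hx
  -- Lipschitz bound on f₀
  obtain ⟨L₀, hL₀⟩ := isCompact_Icc.exists_bound_of_continuousOn
    (hf₀C2.continuous_deriv one_le_two).continuousOn (s := Icc (0:ℝ) d)
  set L : ℝ := max L₀ 0 with hLdef
  have hL : 0 ≤ L := le_max_right _ _
  have hdiff : ∀ x ∈ Icc (0:ℝ) d, DifferentiableAt ℝ f₀ x :=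
    fun x _ => (hf₀C2.differentiable two_ne_zero).differentiableAt
  have hbd : ∀ x ∈ Icc (0:ℝ) d, ‖deriv f₀ x‖ ≤ L :=
    fun x hx => (hL₀ x hx).trans (le_max_left _ _)
  have hLip : ∀ s ∈ Icc (0:ℝ) d, ∀ t ∈ Icc (0:ℝ) d, |f₀ t - f₀ s| ≤ L * |t - s| := by
    intro s hs t ht
    have := (convex_Icc (0:ℝ) d).norm_image_sub_le_of_norm_deriv_le hdiff hbd hs ht
    simpa [Real.norm_eq_abs] using this
  set M : ℝ := 2 * L / δ with hMdef
  have hM : 0 ≤ M := by positivity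
  -- base exponential comparison
  have base : ∀ u ∈ Icc (0:ℝ) d, ∀ v ∈ Icc (0:ℝ) d,
      f₀ u ≤ f₀ v * Real.exp (L/δ * |u - v|) := by
    intro u hu v hv
    have h1 : f₀ u - f₀ v ≤ L * |u - v| := by
      have h := hLip v hv u hu
      calc f₀ u - f₀ v ≤ |f₀ u - f₀ v| := le_abs_self _
        _ ≤ L * |u - v| := h
    have hr : 0 ≤ L/δ * |u - v| := by positivity
    have he : 1 + L/δ * |u - v| ≤ Real.exp (L/δ * |u - v|) := by
      have := Real.add_one_le_exp (L/δ * |u - v|); linarith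
    have hv' : δ ≤ f₀ v := hδ v hv
    have hv0 : 0 < f₀ v := hpos v hv
    calc f₀ u ≤ f₀ v + L * |u - v| := by linarith
      _ = f₀ v + δ * (L/δ * |u - v|) := by field_simp
      _ ≤ f₀ v + f₀ v * (L/δ * |u - v|) := by
          have := mul_le_mul_of_nonneg_right hv' hr
          linarith
      _ = f₀ v * (1 + L/δ * |u - v|) := by ring
      _ ≤ f₀ v * Real.exp (L/δ * |u - v|) :=
          mul_le_mul_of_nonneg_left he hv0.le
  have sqstep : ∀ u ∈ Icc (0:ℝ) d, ∀ v ∈ Icc (0:ℝ) d, ∀ r : ℝ, |u - v| = r →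
      f₀ u ^ 2 ≤ f₀ v ^ 2 * Real.exp (M * r) := by
    intro u hu v hv r hr
    have h1 : f₀ u ≤ f₀ v * Real.exp (L/δ * r) := by
      have := base u hu v hv; rwa [hr] at this
    have hu0 : 0 ≤ f₀ u := (hpos u hu).le
    have h2 : f₀ u ^ 2 ≤ (f₀ v * Real.exp (L/δ * r)) ^ 2 :=
      pow_le_pow_left₀ hu0 h1 2
    calc f₀ u ^ 2 ≤ (f₀ v * Real.exp (L/δ * r)) ^ 2 := h2
      _ = f₀ v ^ 2 * (Real.exp (L/δ * r) * Real.exp (L/δ * r)) := by ring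
      _ = f₀ v ^ 2 * Real.exp (M * r) := by
          rw [← Real.exp_add, hMdef]
          congr 1
          field_simp
          ring
  have keyF : ∀ s ∈ Icc (0:ℝ) d, ∀ t ∈ Icc (0:ℝ) d, s ≤ t →
      f₀ s ^ 2 ≤ f₀ t ^ 2 * Real.exp (M * (t - s)) ∧
      f₀ t ^ 2 ≤ f₀ s ^ 2 * Real.exp (M * (t - s)) := by
    intro s hs t ht hst
    have hr1 : |s - t| = t - s := by
      rw [abs_sub_comm, abs_of_nonneg (sub_nonneg.mpr hst)]
    have hr2 : |t - s| = t - s := abs_of_nonneg (sub_nonneg.mpr hst)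
    exact ⟨sqstep s hs t ht (t - s) hr1, sqstep t ht s hs (t - s) hr2⟩
  have inv_key : ∀ a b e : ℝ, 0 < a → 0 < b → b ≤ a * e → a⁻¹ ≤ b⁻¹ * e := by
    intro a b e ha hb h
    have h2 : (1:ℝ)/a ≤ e/b := by
      rw [div_le_div_iff₀ ha hb]
      nlinarith
    calc a⁻¹ = 1/a := (one_div a).symm
      _ ≤ e/b := h2
      _ = b⁻¹ * e := by rw [div_eq_mul_inv, mul_comm]
  have hFpos : ∀ x ∈ Icc (0:ℝ) d, 0 < f₀ x ^ 2 := fun x hx => pow_pos (hpos x hx) 2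
  have keyG : ∀ s ∈ Icc (0:ℝ) d, ∀ t ∈ Icc (0:ℝ) d, s ≤ t →
      (f₀ s ^ 2)⁻¹ ≤ (f₀ t ^ 2)⁻¹ * Real.exp (M * (t - s)) ∧
      (f₀ t ^ 2)⁻¹ ≤ (f₀ s ^ 2)⁻¹ * Real.exp (M * (t - s)) := by
    intro s hs t ht hst
    obtain ⟨k1, k2⟩ := keyF s hs t ht hst
    exact ⟨inv_key _ _ _ (hFpos s hs) (hFpos t ht) k2,
           inv_key _ _ _ (hFpos t ht) (hFpos s hs) k1⟩
  -- recursion in if-form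
  have hXtrec : ∀ n : ℕ, ∀ x : ℝ, Xt (n + 1) x
      = ((n:ℝ) + 1) * ∫ s in (0:ℝ)..x,
          Xt n s * (if Even n then f₀ s ^ 2 else (f₀ s ^ 2)⁻¹) := by
    intro n x
    have h := hXt (n+1) (Nat.le_add_left 1 n) x
    simp only [Nat.add_sub_cancel] at h
    rw [h]
    push_cast
    congr 1
    by_cases hn : Even n
    · have h1 : ((-1 : ℤ)) ^ n = 1 := hn.neg_one_pow
      simp [h1, if_pos hn]
    · have h1 : ((-1 : ℤ)) ^ n = -1 := (Nat.not_even_iff_odd.mp hn).neg_one_pow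
      simp [h1, if_neg hn, zpow_neg]
  have hXrec : ∀ n : ℕ, ∀ x : ℝ, X (n + 1) x
      = ((n:ℝ) + 1) * ∫ s in (0:ℝ)..x,
          X n s * (if Even n then (f₀ s ^ 2)⁻¹ else ((f₀ s ^ 2)⁻¹)⁻¹) := by
    intro n x
    have h := hX (n+1) (Nat.le_add_left 1 n) x
    simp only [Nat.add_sub_cancel] at h
    rw [h]
    push_cast
    congr 1
    by_cases hn : Even n
    · have h1 : ((-1 : ℤ)) ^ (n+1) = -1 := by
        have : Odd (n+1) := Even.add_one hn
        exact this.neg_one_pow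
      simp [h1, if_pos hn, zpow_neg]
    · have h1 : ((-1 : ℤ)) ^ (n+1) = 1 := by
        have : Even (n+1) := Nat.even_add_one.mpr hn
        exact this.neg_one_pow
      simp [h1, if_neg hn]
  have hFcont : ContinuousOn (fun s => f₀ s ^ 2) (Icc (0:ℝ) d) :=
    (hf₀cont.pow 2).continuousOn
  have hGcont : ContinuousOn (fun s => (f₀ s ^ 2)⁻¹) (Icc (0:ℝ) d) :=
    hFcont.inv₀ (fun x hx => (hFpos x hx).ne')
  have hGpos : ∀ x ∈ Icc (0:ℝ) d, 0 < (f₀ x ^ 2)⁻¹ := fun x hx =>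
    inv_pos.mpr (hFpos x hx)
  have HXt := aux_bound d hd (fun s => f₀ s ^ 2) hFcont hFpos M hM keyF Xt hXt0 hXtrec
  have HX := aux_bound d hd (fun s => (f₀ s ^ 2)⁻¹) hGcont hGpos M hM keyG X hX0 hXrec
  -- global constant
  obtain ⟨Fm, hFm⟩ := isCompact_Icc.exists_bound_of_continuousOn
    hf₀cont.continuousOn (s := Icc (0:ℝ) d)
  have hFm1 : 1 ≤ Fm := by
    have := hFm 0 h0mem
    simpa [hf₀0] using this
  set c₀ : ℝ := Real.exp (M * d) * (1 + (δ ^ 2)⁻¹) with hc₀def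
  have hc₀ : 0 ≤ c₀ := by positivity
  have hφb : ∀ x ∈ Icc (0:ℝ) d, ∀ n : ℕ, |φ n x| ≤ c₀ * f₀ x * x ^ n := by
    intro x hx n
    have hx0 := hx.1
    have hexp : Real.exp (M * x) ≤ Real.exp (M * d) :=
      Real.exp_le_exp.mpr (mul_le_mul_of_nonneg_left hx.2 hM)
    have hfx : 0 < f₀ x := hpos x hx
    rw [hφ]
    by_cases hodd : Odd n
    · rw [if_pos hodd]
      have hb := (HX n).2 x hx
      rw [if_neg (Nat.not_even_iff_odd.mpr hodd)] at hb
      have hinv : (f₀ x ^ 2)⁻¹ ≤ (δ ^ 2)⁻¹ := by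
        have h1 : δ ^ 2 ≤ f₀ x ^ 2 := pow_le_pow_left₀ hδpos.le (hδ x hx) 2
        exact inv_anti₀ (by positivity) h1
      have hco : Real.exp (M * x) * (f₀ x ^ 2)⁻¹ ≤ c₀ := by
        calc Real.exp (M * x) * (f₀ x ^ 2)⁻¹
            ≤ Real.exp (M * d) * (δ ^ 2)⁻¹ := by
              exact mul_le_mul hexp hinv (by positivity) (Real.exp_pos _).le
          _ ≤ c₀ := by
              rw [hc₀def]
              have : (δ^2)⁻¹ ≤ 1 + (δ^2)⁻¹ := by linarith
              exact mul_le_mul_of_nonneg_left this (Real.exp_pos _).le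
      calc |f₀ x * X n x| = f₀ x * |X n x| := by
            rw [abs_mul, abs_of_pos hfx]
        _ ≤ f₀ x * (Real.exp (M * x) * (f₀ x ^ 2)⁻¹ * x ^ n) :=
            mul_le_mul_of_nonneg_left hb hfx.le
        _ = (Real.exp (M * x) * (f₀ x ^ 2)⁻¹) * f₀ x * x ^ n := by ring
        _ ≤ c₀ * f₀ x * x ^ n := by
            have := mul_le_mul_of_nonneg_right hco hfx.le
            exact mul_le_mul_of_nonneg_right this (pow_nonneg hx0 n)
    · rw [if_neg hodd]
      have heven : Even n := Nat.not_odd_iff_even.mp hodd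
      have hb := (HXt n).2 x hx
      rw [if_pos heven] at hb
      have hco : Real.exp (M * x) ≤ c₀ := by
        rw [hc₀def]
        calc Real.exp (M * x) ≤ Real.exp (M * d) := hexp
          _ = Real.exp (M * d) * 1 := (mul_one _).symm
          _ ≤ Real.exp (M * d) * (1 + (δ^2)⁻¹) := by
              have h9 : (0:ℝ) ≤ (δ^2)⁻¹ := by positivity
              have : (1:ℝ) ≤ 1 + (δ^2)⁻¹ := by linarith
              exact mul_le_mul_of_nonneg_left this (Real.exp_pos _).le
      calc |f₀ x * Xt n x| = f₀ x * |Xt n x| := by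
            rw [abs_mul, abs_of_pos hfx]
        _ ≤ f₀ x * (Real.exp (M * x) * x ^ n) :=
            mul_le_mul_of_nonneg_left hb hfx.le
        _ = Real.exp (M * x) * f₀ x * x ^ n := by ring
        _ ≤ c₀ * f₀ x * x ^ n := by
            have := mul_le_mul_of_nonneg_right hco hfx.le
            exact mul_le_mul_of_nonneg_right this (pow_nonneg hx0 n)
  refine ⟨c₀, ?_, ?_⟩
  · -- first conjunct
    intro x hx n
    have hfx : 0 < f₀ x := hpos x hx
    have hS : 1 ≤ sSup ((fun s => |1 / f₀ s|) '' Icc 0 x) := by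
      have hmem : (1:ℝ) ∈ (fun s => |1 / f₀ s|) '' Icc 0 x :=
        ⟨0, ⟨le_refl 0, hx.1⟩, by simp [hf₀0]⟩
      have hbdd : BddAbove ((fun s => |1 / f₀ s|) '' Icc 0 x) := by
        refine ⟨δ⁻¹, ?_⟩
        rintro y ⟨s, hs, rfl⟩
        have hs' : s ∈ Icc (0:ℝ) d := Icc_subset_Icc_right hx.2 hs
        have hfs : 0 < f₀ s := hpos s hs'
        show |1 / f₀ s| ≤ δ⁻¹
        have habs : |1 / f₀ s| = (f₀ s)⁻¹ := by
          rw [abs_of_pos (by positivity), one_div]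
        rw [habs]
        exact inv_anti₀ hδpos (hδ s hs')
      exact le_csSup hbdd hmem
    have hmax : f₀ x ≤ max 1 (f₀ x * sSup ((fun s => |1 / f₀ s|) '' Icc 0 x)) :=
      le_max_of_le_right (le_mul_of_one_le_right hfx.le hS)
    calc |φ n x| ≤ c₀ * f₀ x * x ^ n := hφb x hx n
      _ ≤ c₀ * max 1 (f₀ x * sSup ((fun s => |1 / f₀ s|) '' Icc 0 x)) * x ^ n := by
          have := mul_le_mul_of_nonneg_left hmax hc₀
          exact mul_le_mul_of_nonneg_right this (pow_nonneg hx.1 n)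
  · -- second conjunct
    intro K hK
    obtain ⟨R₀, hR₀⟩ := hK.isBounded.subset_closedBall 0
    set R : ℝ := max R₀ 0 with hRdef
    have hR : ∀ ω ∈ K, ‖ω‖ ≤ R := by
      intro ω hω
      have := hR₀ hω
      rw [Metric.mem_closedBall, dist_zero_right] at this
      exact this.trans (le_max_left _ _)
    have hR0 : 0 ≤ R := le_max_right _ _
    set u : ℕ → ℝ := fun n => (c₀ * Fm) * ((R * d) ^ n / (Nat.factorial n)) with hu_def
    have hu : Summable u := (Real.summable_pow_div_factorial (R * d)).mul_left _
    have hbound : ∀ (n : ℕ) (p : ℝ × ℂ), p ∈ Icc (0:ℝ) d ×ˢ K →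
        ‖(-(Complex.I * p.2)) ^ n * (φ n p.1 : ℂ) / (Nat.factorial n : ℂ)‖ ≤ u n := by
      rintro n ⟨x, ω⟩ hp
      obtain ⟨hx, hωK⟩ := hp
      have hnorm : ‖(-(Complex.I * ω)) ^ n * (φ n x : ℂ) / (Nat.factorial n : ℂ)‖
          = ‖ω‖ ^ n * |φ n x| / (Nat.factorial n : ℝ) := by
        rw [norm_div, norm_mul, norm_pow, norm_neg, norm_mul, Complex.norm_I, one_mul,
          Complex.norm_real, Real.norm_eq_abs, Complex.norm_natCast]
      simp only [hu_def]
      rw [hnorm]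
      have h1 : ‖ω‖ ^ n ≤ R ^ n := pow_le_pow_left₀ (norm_nonneg _) (hR ω hωK) n
      have h2 : |φ n x| ≤ c₀ * Fm * d ^ n := by
        calc |φ n x| ≤ c₀ * f₀ x * x ^ n := hφb x hx n
          _ ≤ c₀ * Fm * d ^ n := by
              have hf : f₀ x ≤ Fm := by
                have := hFm x hx
                rw [Real.norm_eq_abs] at this
                exact (le_abs_self _).trans this
              have hx' : x ^ n ≤ d ^ n := pow_le_pow_left₀ hx.1 hx.2 n
              have e1 : c₀ * f₀ x ≤ c₀ * Fm := mul_le_mul_of_nonneg_left hf hc₀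
              have e2 : c₀ * f₀ x * x ^ n ≤ c₀ * Fm * x ^ n :=
                mul_le_mul_of_nonneg_right e1 (pow_nonneg hx.1 n)
              have e3 : c₀ * Fm * x ^ n ≤ c₀ * Fm * d ^ n :=
                mul_le_mul_of_nonneg_left hx' (by positivity)
              linarith
      have hnum : ‖ω‖ ^ n * |φ n x| ≤ (c₀ * Fm) * (R * d) ^ n := by
        calc ‖ω‖ ^ n * |φ n x| ≤ R ^ n * (c₀ * Fm * d ^ n) := by
              exact mul_le_mul h1 h2 (abs_nonneg _) (pow_nonneg hR0 n)
          _ = (c₀ * Fm) * (R * d) ^ n := by rw [mul_pow]; ring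
      have hfac : (0:ℝ) < (Nat.factorial n : ℝ) := by
        exact_mod_cast Nat.factorial_pos n
      calc ‖ω‖ ^ n * |φ n x| / (Nat.factorial n : ℝ)
          ≤ (c₀ * Fm) * (R * d) ^ n / (Nat.factorial n : ℝ) := by gcongr
        _ = (c₀ * Fm) * ((R * d) ^ n / (Nat.factorial n : ℝ)) := by ring
    constructor
    · intro x hx ω hωK
      exact Summable.of_nonneg_of_le (fun n => norm_nonneg _)
        (fun n => hbound n (x, ω) ⟨hx, hωK⟩) hu
    · exact tendstoUniformlyOn_tsum_nat hu hbound
end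

section
/- Suppose u(ω,x) = e^{-iωx}(1 + Σ_{n=0}^∞ (-1)^n a_n(x)(iω)^n/(1-iω)^{n+1}) where Σ a_n(x)L_n(t) converges in L²(0,∞;e^{-t}) to a function a(x,·) for each x. Define the partial sum u_N(ω,x) = e^{-iωx}(1 + Σ_{n=0}^N (-1)^n a_n(x)(iω)^n/(1-iω)^{n+1}). Then for all real ω, |u(ω,x) - u_N(ω,x)| ≤ ε_N(x) where ε_N(x) = (∫₀^∞ e^{-t}|a(x,t) - Σ_{n=0}^N a_n(x)L_n(t)|² dt)^{1/2}; moreover ε_N(x) → 0 as N → ∞ and ε_N(x) does not depend on ω. -/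
open MeasureTheory Set Filter Topology

noncomputable def laguerre (n : ℕ) (x : ℝ) : ℝ :=
  ∑ k ∈ Finset.range (n + 1), ((-1 : ℝ) ^ k / (Nat.factorial k)) * (n.choose k) * x ^ k

/- ### Auxiliary lemmas -/

lemma comb_identity (n j : ℕ) :
    ∑ k ∈ Finset.range (n+1), (-1:ℝ)^k * (n.choose k) * ((j+k).choose j)
    = (-1)^n * (j.choose n) := by
  classical
  have hsgn : ∀ k ≤ n, (-1:ℝ)^k = (-1:ℝ)^n * (-1:ℝ)^(n-k) := by
    intro k hk
    have hnk : n + (n-k) = 2*(n-k)+k := by omega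
    rw [← pow_add, hnk, pow_add, pow_mul]
    norm_num
  have hinner : ∑ k ∈ Finset.range (n+1), Polynomial.C ((-1:ℝ)^k * (n.choose k)) * (Polynomial.X+1)^k
      = Polynomial.C ((-1:ℝ)^n) * Polynomial.X^n := by
    have hb := add_pow (Polynomial.X+1 : Polynomial ℝ) (-1) n
    have hX : ((Polynomial.X+1 : Polynomial ℝ) + (-1))^n = Polynomial.X^n := by ring_nf
    rw [hX] at hb
    calc ∑ k ∈ Finset.range (n+1), Polynomial.C ((-1:ℝ)^k * (n.choose k)) * (Polynomial.X+1)^k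
        = ∑ k ∈ Finset.range (n+1),
            Polynomial.C ((-1:ℝ)^n) * ((Polynomial.X+1)^k * (-1)^(n-k) * (n.choose k : Polynomial ℝ)) := by
          refine Finset.sum_congr rfl fun k hk => ?_
          rw [Finset.mem_range_succ_iff] at hk
          have hc : ((n.choose k : ℕ) : Polynomial ℝ) = Polynomial.C ((n.choose k : ℝ)) := by
            simp [Polynomial.C_eq_natCast]
          have hneg : ((-1 : Polynomial ℝ))^(n-k) = Polynomial.C ((-1:ℝ)^(n-k)) := by simp
          rw [hc, hneg, hsgn k hk, map_mul, map_mul]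
          ring
      _ = Polynomial.C ((-1:ℝ)^n) * Polynomial.X^n := by rw [← Finset.mul_sum, ← hb]
  have h1 : (∑ k ∈ Finset.range (n+1), Polynomial.C ((-1:ℝ)^k * (n.choose k)) * (Polynomial.X+1)^(j+k))
      = Polynomial.C ((-1:ℝ)^n) * ((Polynomial.X+1)^j * Polynomial.X^n) := by
    calc (∑ k ∈ Finset.range (n+1), Polynomial.C ((-1:ℝ)^k * (n.choose k)) * (Polynomial.X+1)^(j+k))
        = (Polynomial.X+1)^j * ∑ k ∈ Finset.range (n+1),
            Polynomial.C ((-1:ℝ)^k * (n.choose k)) * (Polynomial.X+1)^k := by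
          rw [Finset.mul_sum]
          exact Finset.sum_congr rfl fun k _ => by rw [pow_add]; ring
      _ = Polynomial.C ((-1:ℝ)^n) * ((Polynomial.X+1)^j * Polynomial.X^n) := by rw [hinner]; ring
  have h2 := congrArg (fun p : Polynomial ℝ => p.coeff j) h1
  simp only [Polynomial.finset_sum_coeff, Polynomial.coeff_C_mul,
    Polynomial.coeff_X_add_one_pow] at h2
  rw [Polynomial.coeff_mul_X_pow'] at h2
  by_cases hnj : n ≤ j
  · rw [if_pos hnj, Polynomial.coeff_X_add_one_pow, Nat.choose_symm hnj] at h2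
    exact h2
  · rw [if_neg hnj] at h2
    rw [Nat.choose_eq_zero_of_lt (by omega)]
    simpa using h2

lemma integrableOn_pow_mul_exp {b : ℝ} (hb : 0 < b) (k : ℕ) :
    IntegrableOn (fun t : ℝ => t ^ k * Real.exp (-(b*t))) (Ioi 0) := by
  apply integrable_of_isBigO_exp_neg (half_pos hb)
  · exact ((continuous_pow k).mul
      (Real.continuous_exp.comp (continuous_const.mul continuous_id).neg)).continuousOn
  · refine Asymptotics.IsLittleO.isBigO
      (Asymptotics.isLittleO_of_tendsto (fun x hx => absurd hx (Real.exp_ne_zero _)) ?_)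
    have h0 := tendsto_rpow_mul_exp_neg_mul_atTop_nhds_zero k (b/2) (half_pos hb)
    apply h0.congr'
    filter_upwards [eventually_gt_atTop (0:ℝ)] with t ht
    rw [Real.rpow_natCast]
    rw [eq_div_iff (Real.exp_ne_zero _), mul_assoc, ← Real.exp_add]
    ring_nf

lemma integral_pow_mul_exp (k : ℕ) :
    ∫ t in Ioi (0:ℝ), t ^ k * Real.exp (-t) = Nat.factorial k := by
  have h := Real.Gamma_eq_integral (by positivity : (0:ℝ) < k + 1)
  rw [Real.Gamma_nat_eq_factorial] at h
  rw [h]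
  refine setIntegral_congr_fun measurableSet_Ioi fun t ht => ?_
  rw [show ((k:ℝ)+1-1) = (k:ℕ) by ring, Real.rpow_natCast]
  ring

lemma norm_pow_cexp (s : ℂ) (m : ℕ) {t : ℝ} (ht : 0 ≤ t) :
    ‖(t:ℂ)^m * Complex.exp (-(s*t))‖ = t^m * Real.exp (-(s.re * t)) := by
  rw [norm_mul, norm_pow, Complex.norm_exp]
  congr 1
  · simp [Real.norm_eq_abs, _root_.abs_of_nonneg ht]
  · congr 1
    simp [Complex.mul_re]

lemma tendsto_pow_mul_cexp {s : ℂ} (hs : 0 < s.re) (m : ℕ) :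
    Tendsto (fun t : ℝ => (t:ℂ)^m * Complex.exp (-(s*t))) atTop (𝓝 0) := by
  rw [tendsto_zero_iff_norm_tendsto_zero]
  have h0 := tendsto_rpow_mul_exp_neg_mul_atTop_nhds_zero m s.re hs
  apply h0.congr'
  filter_upwards [eventually_gt_atTop (0:ℝ)] with t ht
  rw [Real.rpow_natCast, norm_pow_cexp s m ht.le]
  ring_nf

lemma integrableOn_pow_mul_cexp {s : ℂ} (hs : 0 < s.re) (k : ℕ) :
    IntegrableOn (fun t : ℝ => (t:ℂ)^k * Complex.exp (-(s*t))) (Ioi 0) := by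
  refine Integrable.mono' (integrableOn_pow_mul_exp hs k) ?_ ?_
  · exact (Continuous.aestronglyMeasurable (by continuity))
  · filter_upwards [ae_restrict_mem measurableSet_Ioi] with t ht
    rw [norm_pow_cexp s k (le_of_lt ht)]

lemma hasDerivAt_cexp_neg (s : ℂ) (x : ℝ) :
    HasDerivAt (fun t : ℝ => Complex.exp (-(s*t))) (-s * Complex.exp (-(s*x))) x := by
  have h1 : HasDerivAt (fun t : ℝ => -(s*(t:ℂ))) (-s) x := by
    have h := (((hasDerivAt_id x).ofReal_comp).const_mul s).neg
    simp only [mul_one, Complex.ofReal_one] at h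
    exact h
  simpa [mul_comm] using h1.cexp

lemma integral_pow_mul_cexp {s : ℂ} (hs : 0 < s.re) (k : ℕ) :
    ∫ t in Ioi (0:ℝ), (t:ℂ)^k * Complex.exp (-(s*t)) = Nat.factorial k / s^(k+1) := by
  have hs0 : s ≠ 0 := fun h => by simp [h] at hs
  induction k with
  | zero =>
    have hderiv : ∀ x ∈ Ici (0:ℝ), HasDerivAt (fun t : ℝ => -s⁻¹ * Complex.exp (-(s*t)))
        ((x:ℂ)^0 * Complex.exp (-(s*x))) x := by
      intro x _
      have := (hasDerivAt_cexp_neg s x).const_mul (-s⁻¹)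
      convert this using 1
      · rfl
      simp [hs0]
    have := integral_Ioi_of_hasDerivAt_of_tendsto' hderiv
      (integrableOn_pow_mul_cexp hs 0)
      (by simpa using ((tendsto_pow_mul_cexp hs 0).const_mul (-s⁻¹)))
    rw [this]
    simp
  | succ k IH =>
    set g : ℝ → ℂ := fun t => (t:ℂ)^(k+1) * Complex.exp (-(s*t)) with hg
    have hderiv : ∀ x ∈ Ici (0:ℝ), HasDerivAt (fun t : ℝ => -s⁻¹ * g t)
        (g x - ((k:ℂ)+1)/s * ((x:ℂ)^k * Complex.exp (-(s*x)))) x := by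
      intro x _
      have hpow : HasDerivAt (fun t : ℝ => ((t:ℂ))^(k+1)) (((k:ℂ)+1) * (x:ℂ)^k) x := by
        have := (hasDerivAt_pow (k+1) ((x:ℂ))).comp_ofReal
        norm_num at this
        convert this using 1
      have := (hpow.mul (hasDerivAt_cexp_neg s x)).const_mul (-s⁻¹)
      convert this using 1
      · rfl
      · rfl
      simp only [hg]
      field_simp
      ring
    have hint : IntegrableOn (fun x : ℝ =>
        g x - ((k:ℂ)+1)/s * ((x:ℂ)^k * Complex.exp (-(s*x)))) (Ioi 0) :=
      (integrableOn_pow_mul_cexp hs (k+1)).sub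
        ((integrableOn_pow_mul_cexp hs k).const_mul _)
    have htend : Tendsto (fun t : ℝ => -s⁻¹ * g t) atTop (𝓝 0) := by
      simpa using ((tendsto_pow_mul_cexp hs (k+1)).const_mul (-s⁻¹))
    have heq := integral_Ioi_of_hasDerivAt_of_tendsto' hderiv hint htend
    rw [integral_sub (integrableOn_pow_mul_cexp hs (k+1))
      ((integrableOn_pow_mul_cexp hs k).const_mul _), MeasureTheory.integral_const_mul, IH] at heq
    have h0 : -s⁻¹ * g 0 = 0 := by simp [hg]
    rw [h0, sub_zero, sub_eq_zero] at heq
    rw [heq, Nat.factorial_succ]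
    push_cast
    rw [div_mul_div_comm, ← pow_succ']

lemma continuous_laguerre (n : ℕ) : Continuous (laguerre n) := by
  unfold laguerre; fun_prop

lemma laguerre_cexp_eq (n : ℕ) (s : ℂ) : (fun t : ℝ => (laguerre n t : ℂ) * Complex.exp (-(s*t)))
    = fun t : ℝ => ∑ k ∈ Finset.range (n+1),
      (((-1:ℂ)^k / (Nat.factorial k)) * (n.choose k)) * ((t:ℂ)^k * Complex.exp (-(s*t))) := by
  funext t
  unfold laguerre
  push_cast
  rw [Finset.sum_mul]
  exact Finset.sum_congr rfl fun k _ => by ring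

lemma integrableOn_laguerre_cexp (n : ℕ) {s : ℂ} (hs : 0 < s.re) :
    IntegrableOn (fun t : ℝ => (laguerre n t : ℂ) * Complex.exp (-(s*t))) (Ioi 0) := by
  rw [laguerre_cexp_eq]
  exact integrable_finset_sum _ fun k _ => (integrableOn_pow_mul_cexp hs k).const_mul _

lemma integral_laguerre_cexp (n : ℕ) {s : ℂ} (hs : 0 < s.re) :
    ∫ t in Ioi (0:ℝ), (laguerre n t : ℂ) * Complex.exp (-(s*t)) = (s-1)^n / s^(n+1) := by
  have hs0 : s ≠ 0 := fun h => by simp [h] at hs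
  rw [laguerre_cexp_eq]
  rw [integral_finset_sum _ fun k _ => (integrableOn_pow_mul_cexp hs k).const_mul _]
  have hterm : ∀ k ∈ Finset.range (n+1),
      (∫ t in Ioi (0:ℝ), (((-1:ℂ)^k / (Nat.factorial k)) * (n.choose k))
        * ((t:ℂ)^k * Complex.exp (-(s*t))))
      = (-1:ℂ)^k * (n.choose k) * s^(n-k) / s^(n+1) := by
    intro k hk
    rw [Finset.mem_range_succ_iff] at hk
    rw [MeasureTheory.integral_const_mul, integral_pow_mul_cexp hs k]
    have hfac : ((Nat.factorial k : ℂ)) ≠ 0 := by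
      exact_mod_cast Nat.cast_ne_zero.mpr (Nat.factorial_ne_zero k)
    have hpow : s^(n+1) = s^(k+1) * s^(n-k) := by
      rw [← pow_add]; congr 1; omega
    field_simp [hpow]
    rw [hpow]
    ring
  rw [Finset.sum_congr rfl hterm]
  rw [← Finset.sum_div]
  congr 1
  have hb := add_pow (-1 : ℂ) s n
  have hX : ((-1 : ℂ) + s)^n = (s-1)^n := by ring_nf
  rw [hX] at hb
  rw [hb]
  refine Finset.sum_congr rfl fun k hk => ?_
  push_cast
  ring

lemma laguerre_mul_exp_eq (m n : ℕ) :
    (fun t : ℝ => laguerre m t * laguerre n t * Real.exp (-t))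
    = fun t : ℝ => ∑ j ∈ Finset.range (m+1), ∑ k ∈ Finset.range (n+1),
        (((-1:ℝ)^j / (Nat.factorial j)) * (m.choose j) * (((-1:ℝ)^k / (Nat.factorial k)) * (n.choose k)))
          * (t^(j+k) * Real.exp (-t)) := by
  funext t
  unfold laguerre
  rw [Finset.sum_mul_sum]
  rw [Finset.sum_mul]
  refine Finset.sum_congr rfl fun j _ => ?_
  rw [Finset.sum_mul]
  refine Finset.sum_congr rfl fun k _ => ?_
  rw [pow_add]
  ring

lemma integrableOn_laguerre_mul_exp (m n : ℕ) :
    IntegrableOn (fun t : ℝ => laguerre m t * laguerre n t * Real.exp (-t)) (Ioi 0) := by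
  rw [laguerre_mul_exp_eq]
  refine integrable_finset_sum _ fun j _ => integrable_finset_sum _ fun k _ => ?_
  have := (integrableOn_pow_mul_exp one_pos (j+k)).const_mul
    (((-1:ℝ)^j / (Nat.factorial j)) * (m.choose j) * (((-1:ℝ)^k / (Nat.factorial k)) * (n.choose k)))
  simpa [one_mul] using this

lemma integral_laguerre_sq (n : ℕ) :
    ∫ t in Ioi (0:ℝ), laguerre n t * laguerre n t * Real.exp (-t) = 1 := by
  rw [laguerre_mul_exp_eq]
  rw [integral_finset_sum _ fun j _ => integrable_finset_sum _ fun k _ => by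
    simpa [one_mul] using (integrableOn_pow_mul_exp one_pos (j+k)).const_mul _]
  have hjk : ∀ j ∈ Finset.range (n+1),
      (∫ t in Ioi (0:ℝ), ∑ k ∈ Finset.range (n+1),
        (((-1:ℝ)^j / (Nat.factorial j)) * (n.choose j) * (((-1:ℝ)^k / (Nat.factorial k)) * (n.choose k)))
          * (t^(j+k) * Real.exp (-t)))
      = (-1:ℝ)^j * (n.choose j) * ((-1)^n * (j.choose n)) := by
    intro j _
    rw [integral_finset_sum _ fun k _ => by
      simpa [one_mul] using (integrableOn_pow_mul_exp one_pos (j+k)).const_mul _]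
    have hterm : ∀ k ∈ Finset.range (n+1),
        (∫ t in Ioi (0:ℝ),
          (((-1:ℝ)^j / (Nat.factorial j)) * (n.choose j) * (((-1:ℝ)^k / (Nat.factorial k)) * (n.choose k)))
            * (t^(j+k) * Real.exp (-t)))
        = ((-1:ℝ)^j * (n.choose j)) * ((-1)^k * (n.choose k) * ((j+k).choose j)) := by
      intro k _
      rw [MeasureTheory.integral_const_mul, integral_pow_mul_exp (j+k)]
      have hfacs := Nat.add_choose_mul_factorial_mul_factorial j k
      rw [← Nat.choose_symm_add] at hfacs
      have hj : (Nat.factorial j : ℝ) ≠ 0 := Nat.cast_ne_zero.mpr (Nat.factorial_ne_zero j)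
      have hk' : (Nat.factorial k : ℝ) ≠ 0 := Nat.cast_ne_zero.mpr (Nat.factorial_ne_zero k)
      have hcast : ((j+k).factorial : ℝ) = ((j+k).choose j : ℝ) * (Nat.factorial j) * (Nat.factorial k) := by
        exact_mod_cast hfacs.symm
      rw [hcast]
      field_simp
    rw [Finset.sum_congr rfl hterm, ← Finset.mul_sum, comb_identity n j]
  rw [Finset.sum_congr rfl hjk]
  have hsingle : ∀ j ∈ Finset.range (n+1), j ≠ n →
      (-1:ℝ)^j * (n.choose j) * ((-1)^n * (j.choose n)) = 0 := by
    intro j hj hjn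
    rw [Finset.mem_range_succ_iff] at hj
    rw [Nat.choose_eq_zero_of_lt (lt_of_le_of_ne hj hjn)]
    simp
  rw [Finset.sum_eq_single n hsingle (fun h => absurd (Finset.self_mem_range_succ n) h)]
  simp [← mul_pow]

lemma cs_bound {μ : Measure ℝ} (F G : ℝ → ℂ) (hF : AEStronglyMeasurable F μ)
    (hG : AEStronglyMeasurable G μ)
    (hF2 : Integrable (fun t => ‖F t‖^2) μ) (hG2 : Integrable (fun t => ‖G t‖^2) μ) :
    ‖∫ t, F t * G t ∂μ‖ ≤ Real.sqrt (∫ t, ‖F t‖^2 ∂μ) * Real.sqrt (∫ t, ‖G t‖^2 ∂μ) := by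
  have hpq : Real.HolderConjugate 2 2 := Real.HolderConjugate.two_two
  have hmF : MemLp F 2 μ := (memLp_two_iff_integrable_sq_norm hF).2 hF2
  have hmG : MemLp G 2 μ := (memLp_two_iff_integrable_sq_norm hG).2 hG2
  have h2 : (ENNReal.ofReal 2) = 2 := by norm_num
  have key := integral_mul_norm_le_Lp_mul_Lq (μ := μ) hpq (h2 ▸ hmF) (h2 ▸ hmG)
  calc ‖∫ t, F t * G t ∂μ‖ ≤ ∫ t, ‖F t * G t‖ ∂μ := norm_integral_le_integral_norm _
    _ = ∫ t, ‖F t‖ * ‖G t‖ ∂μ := by simp [norm_mul]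
    _ ≤ (∫ t, ‖F t‖^(2:ℝ) ∂μ)^(1/2:ℝ) * (∫ t, ‖G t‖^(2:ℝ) ∂μ)^(1/2:ℝ) := key
    _ = Real.sqrt (∫ t, ‖F t‖^2 ∂μ) * Real.sqrt (∫ t, ‖G t‖^2 ∂μ) := by
        rw [← Real.sqrt_eq_rpow, ← Real.sqrt_eq_rpow]
        congr 2 <;> · refine integral_congr_ae (Eventually.of_forall fun t => ?_)
                      rw [show (2:ℝ) = ((2:ℕ):ℝ) by norm_num]
                      simp [Real.rpow_natCast]

lemma integrable_mul_of_sq {μ : Measure ℝ} (F G : ℝ → ℂ) (hF : AEStronglyMeasurable F μ)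
    (hG : AEStronglyMeasurable G μ)
    (hF2 : Integrable (fun t => ‖F t‖^2) μ) (hG2 : Integrable (fun t => ‖G t‖^2) μ) :
    Integrable (fun t => F t * G t) μ := by
  refine Integrable.mono' (((hF2.add hG2)).div_const 2) (hF.mul hG)
    (Eventually.of_forall fun t => ?_)
  rw [norm_mul]
  have h := sq_nonneg (‖F t‖ - ‖G t‖)
  simp only [Pi.add_apply]
  nlinarith [norm_nonneg (F t), norm_nonneg (G t)]

theorem truncation_estimate (a : ℝ → ℝ → ℂ) (c : ℕ → ℝ → ℂ)
    (hmeas : ∀ x, AEStronglyMeasurable (a x) (volume.restrict (Ioi (0 : ℝ))))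
    (hL2 : ∀ x, IntegrableOn (fun t => Real.exp (-t) * ‖a x t‖ ^ 2) (Ioi (0 : ℝ)))
    (hL2N : ∀ x N, IntegrableOn
      (fun t => Real.exp (-t) *
        ‖a x t - ∑ n ∈ Finset.range (N + 1), c n x * (laguerre n t : ℂ)‖ ^ 2) (Ioi (0 : ℝ)))
    (hconv : ∀ x, Tendsto (fun N => ∫ t in Ioi (0 : ℝ),
        Real.exp (-t) *
          ‖a x t - ∑ n ∈ Finset.range (N + 1), c n x * (laguerre n t : ℂ)‖ ^ 2)
      atTop (𝓝 0))
    (hcoef : ∀ n x, c n x = ∫ t in Ioi (0 : ℝ), a x t * (laguerre n t : ℂ) * Real.exp (-t))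
    (u : ℝ → ℝ → ℂ)
    (hu : ∀ (ω x : ℝ), u ω x = Complex.exp (-Complex.I * ω * x) *
      (1 + ∑' n : ℕ, (-1) ^ n * c n x * (Complex.I * ω) ^ n / (1 - Complex.I * ω) ^ (n + 1)))
    (uN : ℕ → ℝ → ℝ → ℂ)
    (huN : ∀ (N : ℕ) (ω x : ℝ), uN N ω x = Complex.exp (-Complex.I * ω * x) *
      (1 + ∑ n ∈ Finset.range (N + 1),
        (-1) ^ n * c n x * (Complex.I * ω) ^ n / (1 - Complex.I * ω) ^ (n + 1)))
    (ε : ℕ → ℝ → ℝ)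
    (hε : ∀ N x, ε N x = Real.sqrt (∫ t in Ioi (0 : ℝ),
      Real.exp (-t) *
        ‖a x t - ∑ n ∈ Finset.range (N + 1), c n x * (laguerre n t : ℂ)‖ ^ 2)) :
    (∀ (ω x : ℝ) (N : ℕ), ‖u ω x - uN N ω x‖ ≤ ε N x) ∧
    (∀ x, Tendsto (fun N => ε N x) atTop (𝓝 0)) := by
  have hεtend : ∀ x, Tendsto (fun N => ε N x) atTop (𝓝 0) := by
    intro x
    have h := (Real.continuous_sqrt.tendsto 0).comp (hconv x)
    rw [Real.sqrt_zero] at h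
    have heq : (fun N => ε N x) = (Real.sqrt ∘ fun N => ∫ t in Ioi (0 : ℝ),
        Real.exp (-t) * ‖a x t - ∑ n ∈ Finset.range (N + 1), c n x * (laguerre n t : ℂ)‖ ^ 2) := by
      funext N; rw [hε]; rfl
    rw [heq]
    exact h
  refine ⟨?_, hεtend⟩
  intro ω x N
  have hεt := hεtend x
  set s : ℂ := 1 - Complex.I * ω with hsdef
  have hsre : s.re = 1 := by simp [hsdef]
  have hspos : 0 < s.re := by rw [hsre]; norm_num
  have hs0 : s ≠ 0 := by
    intro h; rw [h] at hsre; simp at hsre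
  have habs : ∀ t : ℝ, ‖Complex.exp (-(s*t))‖ = Real.exp (-t) := by
    intro t
    rw [Complex.norm_exp]
    congr 1
    have hre : (-(s*(t:ℂ))).re = -(s.re * t) := by simp [Complex.mul_re]
    rw [hre, hsre, one_mul]
  have hexp_int : IntegrableOn (fun t : ℝ => Real.exp (-t)) (Ioi (0:ℝ)) := by
    have := exp_neg_integrableOn_Ioi (0:ℝ) one_pos
    simpa [one_mul] using this
  -- measurability
  have hfmeas : ∀ M, AEStronglyMeasurable
      (fun t : ℝ => ∑ n ∈ Finset.range (M+1), c n x * (laguerre n t : ℂ))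
      (volume.restrict (Ioi (0:ℝ))) := by
    intro M
    apply Continuous.aestronglyMeasurable
    apply continuous_finset_sum
    intro n _
    exact continuous_const.mul ((Complex.continuous_ofReal).comp (continuous_laguerre n))
  have hcexp_cont : Continuous (fun t : ℝ => Complex.exp (-(s*t))) := by
    apply Complex.continuous_exp.comp
    fun_prop
  -- integrability of a * cexp
  have hInt_a : IntegrableOn (fun t : ℝ => a x t * Complex.exp (-(s*t))) (Ioi 0) := by
    refine Integrable.mono' (((hL2 x).add hexp_int).div_const 2)
      ((hmeas x).mul hcexp_cont.aestronglyMeasurable) (Eventually.of_forall fun t => ?_)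
    rw [norm_mul, habs t]
    simp only [Pi.add_apply]
    nlinarith [mul_nonneg (Real.exp_pos (-t)).le (sq_nonneg (‖a x t‖ - 1)),
      Real.exp_pos (-t), norm_nonneg (a x t)]
  -- integrability of partial sums * cexp
  have hfeq : ∀ M : ℕ, (fun t : ℝ =>
      (∑ n ∈ Finset.range (M+1), c n x * (laguerre n t:ℂ)) * Complex.exp (-(s*t)))
      = fun t : ℝ => ∑ n ∈ Finset.range (M+1),
          c n x * ((laguerre n t : ℂ) * Complex.exp (-(s*t))) := by
    intro M
    funext t; rw [Finset.sum_mul]; exact Finset.sum_congr rfl fun n _ => by ring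
  have hInt_f : ∀ M, IntegrableOn (fun t : ℝ =>
      (∑ n ∈ Finset.range (M+1), c n x * (laguerre n t : ℂ)) * Complex.exp (-(s*t))) (Ioi 0) := by
    intro M
    rw [hfeq M]
    exact integrable_finset_sum _ fun n _ => ((integrableOn_laguerre_cexp n hspos).const_mul _)
  -- value of partial-sum integral
  have hSN : ∀ M : ℕ, (∫ t in Ioi (0:ℝ),
      (∑ n ∈ Finset.range (M+1), c n x * (laguerre n t : ℂ)) * Complex.exp (-(s*t)))
      = ∑ n ∈ Finset.range (M+1),
        (-1)^n * c n x * (Complex.I * ω)^n / s^(n+1) := by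
    intro M
    rw [hfeq M]
    rw [integral_finset_sum _ fun n _ => ((integrableOn_laguerre_cexp n hspos).const_mul _)]
    refine Finset.sum_congr rfl fun n _ => ?_
    rw [MeasureTheory.integral_const_mul, integral_laguerre_cexp n hspos]
    have h1 : s - 1 = -(Complex.I * ω) := by rw [hsdef]; ring
    rw [h1, neg_pow]
    ring
  -- Cauchy-Schwarz bound
  have hCS : ∀ M : ℕ, ‖(∫ t in Ioi (0:ℝ), a x t * Complex.exp (-(s*t)))
      - ∫ t in Ioi (0:ℝ),
        (∑ n ∈ Finset.range (M+1), c n x * (laguerre n t:ℂ)) * Complex.exp (-(s*t))‖ ≤ ε M x := by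
    intro M
    rw [← integral_sub hInt_a (hInt_f M)]
    set F : ℝ → ℂ := fun t =>
      (a x t - ∑ n ∈ Finset.range (M+1), c n x * (laguerre n t:ℂ)) * (Real.exp (-(t/2)) : ℂ)
      with hF
    set G : ℝ → ℂ := fun t => Complex.exp (-(s*t)) * (Real.exp (t/2) : ℂ) with hG
    have hfg : ∀ t : ℝ, a x t * Complex.exp (-(s*t))
        - (∑ n ∈ Finset.range (M+1), c n x * (laguerre n t:ℂ)) * Complex.exp (-(s*t))
        = F t * G t := by
      intro t
      rw [hF, hG]
      have hee : ((Real.exp (-(t/2)) : ℂ)) * ((Real.exp (t/2) : ℂ)) = 1 := by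
        rw [← Complex.ofReal_mul, ← Real.exp_add]
        norm_num
      calc a x t * Complex.exp (-(s*t))
          - (∑ n ∈ Finset.range (M+1), c n x * (laguerre n t:ℂ)) * Complex.exp (-(s*t))
          = (a x t - ∑ n ∈ Finset.range (M+1), c n x * (laguerre n t:ℂ)) * Complex.exp (-(s*t))
            * (((Real.exp (-(t/2)) : ℂ)) * ((Real.exp (t/2) : ℂ))) := by rw [hee]; ring
        _ = _ := by ring
    rw [integral_congr_ae (Eventually.of_forall hfg)]
    have hF2eq : (fun t => ‖F t‖^2) = fun t => Real.exp (-t) *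
        ‖a x t - ∑ n ∈ Finset.range (M+1), c n x * (laguerre n t : ℂ)‖^2 := by
      funext t
      rw [hF]
      simp only [norm_mul, Complex.norm_real, Real.norm_eq_abs,
        _root_.abs_of_pos (Real.exp_pos _)]
      rw [mul_pow, pow_two (Real.exp (-(t/2))), ← Real.exp_add]
      ring_nf
    have hG2eq : (fun t => ‖G t‖^2) = fun t : ℝ => Real.exp (-t) := by
      funext t
      rw [hG]
      simp only [norm_mul, habs t, Complex.norm_real, Real.norm_eq_abs,
        _root_.abs_of_pos (Real.exp_pos _)]
      rw [mul_pow, pow_two (Real.exp (-t)), pow_two (Real.exp (t/2)),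
        ← Real.exp_add, ← Real.exp_add, ← Real.exp_add]
      ring_nf
    have hFmeas : AEStronglyMeasurable F (volume.restrict (Ioi (0:ℝ))) := by
      rw [hF]
      exact ((hmeas x).sub (hfmeas M)).mul
        (Continuous.aestronglyMeasurable (by fun_prop))
    have hGmeas : AEStronglyMeasurable G (volume.restrict (Ioi (0:ℝ))) := by
      rw [hG]
      exact (hcexp_cont.mul (by fun_prop)).aestronglyMeasurable
    have hF2 : Integrable (fun t => ‖F t‖^2) (volume.restrict (Ioi (0:ℝ))) := by
      rw [hF2eq]; exact hL2N x M
    have hG2 : Integrable (fun t => ‖G t‖^2) (volume.restrict (Ioi (0:ℝ))) := by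
      rw [hG2eq]; exact hexp_int
    have hkey := cs_bound F G hFmeas hGmeas hF2 hG2
    rw [hF2eq, hG2eq] at hkey
    rw [hε]
    calc ‖∫ t in Ioi (0:ℝ), F t * G t‖ = ‖∫ t in Ioi (0:ℝ), F t * G t‖ := rfl
      _ ≤ _ := hkey
      _ ≤ _ := by
          rw [integral_exp_neg_Ioi_zero, Real.sqrt_one, mul_one]
  -- coefficient bound
  set K : ℝ := Real.sqrt (∫ t in Ioi (0:ℝ), Real.exp (-t) * ‖a x t‖^2) with hKdef
  have hKc : ∀ n, ‖c n x‖ ≤ K := by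
    intro n
    rw [hcoef n x]
    set F : ℝ → ℂ := fun t => a x t * (Real.exp (-(t/2)) : ℂ) with hF
    set G : ℝ → ℂ := fun t => (laguerre n t : ℂ) * (Real.exp (-(t/2)) : ℂ) with hG
    have hfg : ∀ t : ℝ, a x t * (laguerre n t : ℂ) * (Real.exp (-t) : ℂ) = F t * G t := by
      intro t
      rw [hF, hG]
      have hee : ((Real.exp (-(t/2)) : ℂ)) * ((Real.exp (-(t/2)) : ℂ)) = (Real.exp (-t) : ℂ) := by
        rw [← Complex.ofReal_mul, ← Real.exp_add]
        norm_num
        congr 1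
        ring
      rw [← hee]; ring
    rw [integral_congr_ae (Eventually.of_forall hfg)]
    have hF2eq : (fun t => ‖F t‖^2) = fun t => Real.exp (-t) * ‖a x t‖^2 := by
      funext t
      rw [hF]
      simp only [norm_mul, Complex.norm_real, Real.norm_eq_abs,
        _root_.abs_of_pos (Real.exp_pos _)]
      rw [mul_pow, pow_two (Real.exp (-(t/2))), ← Real.exp_add]
      ring_nf
    have hG2eq : (fun t => ‖G t‖^2) = fun t => laguerre n t * laguerre n t * Real.exp (-t) := by
      funext t
      rw [hG]
      simp only [norm_mul, Complex.norm_real, Real.norm_eq_abs,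
        _root_.abs_of_pos (Real.exp_pos _)]
      rw [mul_pow, pow_two (Real.exp (-(t/2))), ← Real.exp_add, pow_two |laguerre n t|,
        abs_mul_abs_self]
      ring_nf
    have hFmeas : AEStronglyMeasurable F (volume.restrict (Ioi (0:ℝ))) := by
      rw [hF]
      exact (hmeas x).mul (Continuous.aestronglyMeasurable (by fun_prop))
    have hGmeas : AEStronglyMeasurable G (volume.restrict (Ioi (0:ℝ))) := by
      rw [hG]
      refine Continuous.aestronglyMeasurable ?_
      refine Continuous.mul ((Complex.continuous_ofReal).comp (continuous_laguerre n)) ?_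
      fun_prop
    have hF2 : Integrable (fun t => ‖F t‖^2) (volume.restrict (Ioi (0:ℝ))) := by
      rw [hF2eq]; exact hL2 x
    have hG2 : Integrable (fun t => ‖G t‖^2) (volume.restrict (Ioi (0:ℝ))) := by
      rw [hG2eq]; exact integrableOn_laguerre_mul_exp n n
    have hkey := cs_bound F G hFmeas hGmeas hF2 hG2
    rw [hF2eq, hG2eq, integral_laguerre_sq n, Real.sqrt_one, mul_one] at hkey
    exact hkey
  have hK0 : 0 ≤ K := Real.sqrt_nonneg _
  -- summability of the series
  have habs_s : |ω| < ‖s‖ := by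
    have h1 : (‖s‖)^2 = 1 + ω^2 := by
      rw [Complex.sq_norm, Complex.normSq_apply]
      simp [hsdef]
      ring
    nlinarith [norm_nonneg s, abs_nonneg ω, sq_abs ω]
  have hA0 : 0 < ‖s‖ := lt_of_le_of_lt (abs_nonneg ω) habs_s
  have hterm_bound : ∀ n : ℕ, ‖(-1:ℂ)^n * c n x * (Complex.I*ω)^n / s^(n+1)‖
      ≤ (K / ‖s‖) * (|ω| / ‖s‖)^n := by
    intro n
    have hIω : ‖(Complex.I*(ω:ℂ))‖ = |ω| := by
      rw [norm_mul, Complex.norm_I, one_mul, Complex.norm_real,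
        Real.norm_eq_abs]
    rw [norm_div, norm_mul, norm_mul, norm_pow, norm_pow, norm_pow, hIω]
    have hrw : (K / ‖s‖) * (|ω| / ‖s‖)^n
        = K * |ω|^n / (‖s‖)^(n+1) := by
      rw [div_pow, div_mul_div_comm, pow_succ']
    rw [hrw]
    have hns : ‖s‖ = ‖s‖ := rfl
    rw [hns]
    have h1 : ‖(-1:ℂ)‖ = 1 := by simp
    rw [h1, one_pow, one_mul]
    have hc := hKc n
    gcongr
  have hsummable : Summable (fun n : ℕ => (-1:ℂ)^n * c n x * (Complex.I*(ω:ℂ))^n / s^(n+1)) := by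
    apply Summable.of_norm
    refine Summable.of_nonneg_of_le (fun n => norm_nonneg _) hterm_bound ?_
    apply Summable.mul_left
    exact summable_geometric_of_lt_one (by positivity) ((div_lt_one hA0).2 habs_s)
  have hpartial : Tendsto (fun M : ℕ => ∑ n ∈ Finset.range (M+1),
      (-1:ℂ)^n * c n x * (Complex.I*(ω:ℂ))^n / s^(n+1)) atTop
      (𝓝 (∑' n : ℕ, (-1:ℂ)^n * c n x * (Complex.I*(ω:ℂ))^n / s^(n+1))) := by
    have h := hsummable.hasSum.tendsto_sum_nat
    exact h.comp (tendsto_add_atTop_nat 1)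
  have hAten : Tendsto (fun M : ℕ => ∑ n ∈ Finset.range (M+1),
      (-1:ℂ)^n * c n x * (Complex.I*(ω:ℂ))^n / s^(n+1)) atTop
      (𝓝 (∫ t in Ioi (0:ℝ), a x t * Complex.exp (-(s*t)))) := by
    rw [tendsto_iff_dist_tendsto_zero]
    refine squeeze_zero (fun M => dist_nonneg) (fun M => ?_) hεt
    rw [← hSN M, dist_eq_norm, norm_sub_rev]
    exact hCS M
  have htsum : (∑' n : ℕ, (-1:ℂ)^n * c n x * (Complex.I*(ω:ℂ))^n / s^(n+1))
      = ∫ t in Ioi (0:ℝ), a x t * Complex.exp (-(s*t)) :=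
    tendsto_nhds_unique hpartial hAten
  rw [hu ω x, huN N ω x]
  rw [← hsdef]
  have hdiff : ∀ (z w v : ℂ), z*(1+w) - z*(1+v) = z*(w-v) := fun z w v => by ring
  rw [hdiff, norm_mul]
  have habse : ‖Complex.exp (-Complex.I * (ω:ℂ) * (x:ℂ))‖ = 1 := by
    rw [Complex.norm_exp]
    have hre0 : (-Complex.I * (ω:ℂ) * (x:ℂ)).re = 0 := by simp
    rw [hre0, Real.exp_zero]
  rw [habse, one_mul, htsum, ← hSN N]
  exact hCS N
end
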